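/- arXiv:math/0310077 — 5 statements merged into one kernel-verified Lean document; each statement's English description precedes it below -/
import Mathlib

section
/- Suppose q is not proportional to q_κ*: for every real number A there exists u > 0 with q(u) ≠ A·q_κ*(u). Then q is not exponentially bounded: for every λ > 0 and all constants B, u_0 > 0 there exists u ≥ u_0 with |q(u)| > B·e^{λu}. -/
open MeasureTheory Filter Set

/-- The solution `q_κ*(u) = ∫_0^∞ exp(−u x − κ ∫_0^x (1 − e^{−t})/t dt) dx`. -/
noncomputable def qkstar (κ : ℝ) (u : ℝ) : ℝ :=
  ∫ x in Set.Ioi (0 : ℝ),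
    Real.exp (-(u * x) - κ * ∫ t in (0 : ℝ)..x, (1 - Real.exp (-t)) / t)

open Topology

lemma phi_nonneg {t : ℝ} (ht : 0 ≤ t) : 0 ≤ (1 - Real.exp (-t)) / t := by
  rcases eq_or_lt_of_le ht with h | h
  · simp [← h]
  · apply div_nonneg _ h.le
    have : Real.exp (-t) ≤ 1 := Real.exp_le_one_iff.2 (by linarith)
    linarith

lemma phi_le_one {t : ℝ} (ht : 0 ≤ t) : (1 - Real.exp (-t)) / t ≤ 1 := by
  rcases eq_or_lt_of_le ht with h | h
  · simp [← h]
  · rw [div_le_one h]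
    have := Real.add_one_le_exp (-t)
    linarith

lemma phi_meas : Measurable (fun t : ℝ => (1 - Real.exp (-t)) / t) :=
  ((measurable_const.sub (Real.measurable_exp.comp measurable_neg))).div measurable_id

lemma phi_intervalIntegrable {x : ℝ} (hx : 0 ≤ x) :
    IntervalIntegrable (fun t : ℝ => (1 - Real.exp (-t)) / t) volume 0 x := by
  rw [intervalIntegrable_iff_integrableOn_Ioc_of_le hx]
  apply Measure.integrableOn_of_bounded (M := 1) (by simp) phi_meas.aestronglyMeasurable
  · filter_upwards [ae_restrict_mem measurableSet_Ioc] with t ht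
    rw [Real.norm_eq_abs, abs_of_nonneg (phi_nonneg ht.1.le)]
    exact phi_le_one ht.1.le

noncomputable def FF (x : ℝ) : ℝ := ∫ t in (0:ℝ)..x, (1 - Real.exp (-t)) / t

lemma FF_nonneg {x : ℝ} (hx : 0 ≤ x) : 0 ≤ FF x :=
  intervalIntegral.integral_nonneg hx (fun t ht => phi_nonneg ht.1)

lemma FF_le {x : ℝ} (hx : 0 ≤ x) : FF x ≤ x := by
  have := intervalIntegral.integral_mono_on hx (phi_intervalIntegrable hx)
    intervalIntegrable_const (fun t ht => phi_le_one ht.1)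
  simpa [FF] using this

lemma FF_hasDerivAt {x : ℝ} (hx : 0 < x) :
    HasDerivAt FF ((1 - Real.exp (-x)) / x) x := by
  apply intervalIntegral.integral_hasDerivAt_right (phi_intervalIntegrable hx.le)
    (phi_meas.stronglyMeasurable.stronglyMeasurableAtFilter)
  exact ((continuous_const.sub (Real.continuous_exp.comp continuous_neg)).continuousAt).div
    continuousAt_id (ne_of_gt hx)

lemma FF_continuousOn : ContinuousOn FF (Ici 0) := by
  intro x hx
  rcases eq_or_lt_of_le (show (0:ℝ) ≤ x from hx) with h | h
  · have h0 : FF 0 = 0 := by simp [FF]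
    rw [← h, ContinuousWithinAt, h0]
    apply squeeze_zero' (g := fun x => x)
    · filter_upwards [self_mem_nhdsWithin] with y hy; exact FF_nonneg hy
    · filter_upwards [self_mem_nhdsWithin] with y hy; exact FF_le hy
    · exact tendsto_nhdsWithin_of_tendsto_nhds tendsto_id
  · exact (FF_hasDerivAt h).continuousAt.continuousWithinAt

lemma integrand_continuousOn (κ u : ℝ) :
    ContinuousOn (fun x : ℝ => Real.exp (-(u * x) - κ * FF x)) (Ici 0) :=
  Real.continuous_exp.comp_continuousOn
    (((continuous_const.mul continuous_id : Continuous fun x:ℝ => u*x).neg.continuousOn).sub (FF_continuousOn.const_smul κ))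

lemma integrand_le {κ u x : ℝ} (hκ : 0 ≤ κ) (hx : 0 ≤ x) :
    Real.exp (-(u * x) - κ * FF x) ≤ Real.exp (-(u * x)) := by
  apply Real.exp_le_exp.2
  have := mul_nonneg hκ (FF_nonneg hx)
  linarith

lemma qk_integrableOn {κ u : ℝ} (hκ : 0 ≤ κ) (hu : 0 < u) :
    IntegrableOn (fun x : ℝ => Real.exp (-(u * x) - κ * FF x)) (Ioi 0) := by
  apply ((exp_neg_integrableOn_Ioi 0 hu)).mono'
    (((integrand_continuousOn κ u).mono Ioi_subset_Ici_self).aestronglyMeasurable measurableSet_Ioi)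
  filter_upwards [ae_restrict_mem measurableSet_Ioi] with x hx
  rw [Real.norm_eq_abs, abs_of_nonneg (Real.exp_nonneg _), neg_mul]
  exact integrand_le hκ (le_of_lt hx)

noncomputable def qkstar' (κ : ℝ) (u : ℝ) : ℝ :=
  ∫ x in Set.Ioi (0 : ℝ),
    Real.exp (-(u * x) - κ * ∫ t in (0 : ℝ)..x, (1 - Real.exp (-t)) / t)

lemma qkstar'_eq (κ u : ℝ) :
    qkstar' κ u = ∫ x in Set.Ioi (0 : ℝ), Real.exp (-(u * x) - κ * FF x) := rfl

lemma qkstar'_nonneg (κ u : ℝ) : 0 ≤ qkstar' κ u :=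
  setIntegral_nonneg measurableSet_Ioi (fun x _ => Real.exp_nonneg _)

lemma qkstar'_anti {κ u v : ℝ} (hκ : 0 < κ) (hu : 0 < u) (huv : u ≤ v) :
    qkstar' κ v ≤ qkstar' κ u := by
  rw [qkstar'_eq, qkstar'_eq]
  apply setIntegral_mono_on (qk_integrableOn hκ.le (lt_of_lt_of_le hu huv))
    (qk_integrableOn hκ.le hu) measurableSet_Ioi
  intro x hx
  apply Real.exp_le_exp.2
  have : u * x ≤ v * x := mul_le_mul_of_nonneg_right huv (le_of_lt hx)
  linarith

lemma qkstar'_continuousAt {κ u : ℝ} (hκ : 0 < κ) (hu : 0 < u) :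
    ContinuousAt (qkstar' κ) u := by
  apply continuousAt_of_dominated (bound := fun x => Real.exp (-(u/2) * x))
  · apply Eventually.of_forall
    intro u'
    exact ((integrand_continuousOn κ u').mono Ioi_subset_Ici_self).aestronglyMeasurable
      measurableSet_Ioi
  · filter_upwards [Ioi_mem_nhds (show u/2 < u by linarith)] with u' hu'
    filter_upwards [ae_restrict_mem measurableSet_Ioi] with x hx
    rw [Real.norm_eq_abs, abs_of_nonneg (Real.exp_nonneg _)]
    calc Real.exp (-(u' * x) - κ * FF x) ≤ Real.exp (-(u' * x)) :=
          integrand_le hκ.le (le_of_lt hx)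
      _ ≤ Real.exp (-(u/2) * x) := by
          apply Real.exp_le_exp.2
          have : u/2 * x ≤ u' * x := mul_le_mul_of_nonneg_right (le_of_lt hu') (le_of_lt hx)
          linarith
  · exact exp_neg_integrableOn_Ioi 0 (by linarith)
  · apply Eventually.of_forall
    intro x
    exact (Real.continuous_exp.comp
      (((continuous_id.mul continuous_const).neg).sub continuous_const)).continuousAt

lemma exp_interval_int {x u : ℝ} (hx : 0 < x) :
    ∫ t in u..(u+1), Real.exp (-(t*x)) = Real.exp (-(u*x))/x - Real.exp (-((u+1)*x))/x := by
  have hd : ∀ t ∈ uIcc u (u+1), HasDerivAt (fun t => -(Real.exp (-(t*x))/x)) (Real.exp (-(t*x))) t := by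
    intro t _
    have h1 : HasDerivAt (fun t : ℝ => -(t*x)) (-x) t := by
      exact ((hasDerivAt_id t).mul_const x).neg.congr_deriv (by ring)
    have h2 := ((h1.exp).div_const x).neg
    exact h2.congr_deriv (by rw [mul_neg, neg_div, neg_neg, mul_div_assoc, div_self hx.ne', mul_one])
  have := intervalIntegral.integral_eq_sub_of_hasDerivAt hd
    ((Real.continuous_exp.comp ((continuous_id.mul continuous_const).neg)).intervalIntegrable u (u+1))
  rw [this]; ring

lemma qk_key {κ u : ℝ} (hκ : 0 < κ) (hu : 0 < u) :
    u * qkstar' κ u + κ * ∫ t in u..(u+1), qkstar' κ t = 1 := by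
  set φ := fun t : ℝ => (1 - Real.exp (-t)) / t with hφ
  set h := fun x : ℝ => Real.exp (-(u * x) - κ * FF x) with hh
  have hmeas_h : AEStronglyMeasurable h (volume.restrict (Ioi (0:ℝ))) :=
    ((integrand_continuousOn κ u).mono Ioi_subset_Ici_self).aestronglyMeasurable measurableSet_Ioi
  have hint_h : IntegrableOn h (Ioi 0) := qk_integrableOn hκ.le hu
  have hderiv : ∀ x ∈ Ioi (0:ℝ), HasDerivAt h ((-u - κ * φ x) * h x) x := by
    intro x hx
    have h1 : HasDerivAt (fun y : ℝ => -(u * y) - κ * FF y) (-u - κ * φ x) x := by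
      have ha : HasDerivAt (fun y : ℝ => u * y) u x := by
        simpa using (hasDerivAt_id x).const_mul u
      exact ha.neg.sub ((FF_hasDerivAt hx).const_mul κ)
    have := h1.exp
    convert this using 1
    ring
  have htop : Tendsto h atTop (𝓝 0) := by
    apply squeeze_zero' (g := fun x => Real.exp (-(u*x)))
    · exact Eventually.of_forall (fun x => Real.exp_nonneg _)
    · filter_upwards [eventually_ge_atTop (0:ℝ)] with x hx
      exact integrand_le hκ.le hx
    · have : Tendsto (fun x : ℝ => -(u*x)) atTop atBot :=
        tendsto_neg_atTop_atBot.comp (Tendsto.const_mul_atTop hu tendsto_id)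
      exact Real.tendsto_exp_atBot.comp this
  have hint_φh : IntegrableOn (fun x => φ x * h x) (Ioi 0) := by
    apply (exp_neg_integrableOn_Ioi 0 hu).mono'
      (((phi_meas.aestronglyMeasurable).mul hmeas_h :
        AEStronglyMeasurable (fun x => φ x * h x) _))
    filter_upwards [ae_restrict_mem measurableSet_Ioi] with x hx
    show ‖φ x * h x‖ ≤ Real.exp (-u * x)
    rw [Real.norm_eq_abs, abs_mul, abs_of_nonneg (phi_nonneg hx.le),
      abs_of_nonneg (Real.exp_nonneg _)]
    calc φ x * h x ≤ 1 * h x := by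
          apply mul_le_mul_of_nonneg_right (phi_le_one hx.le) (Real.exp_nonneg _)
      _ = h x := one_mul _
      _ ≤ Real.exp (-u * x) := by rw [neg_mul]; exact integrand_le hκ.le hx.le
  have hint_d : IntegrableOn (fun x => (-u - κ * φ x) * h x) (Ioi 0) := by
    apply ((exp_neg_integrableOn_Ioi 0 hu).const_mul (u + κ)).mono'
      (((aestronglyMeasurable_const.sub ((phi_meas.aestronglyMeasurable).const_mul κ)).mul hmeas_h :
        AEStronglyMeasurable (fun x => (-u - κ * φ x) * h x) _))
    filter_upwards [ae_restrict_mem measurableSet_Ioi] with x hx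
    show ‖(-u - κ * φ x) * h x‖ ≤ (u + κ) * Real.exp (-u * x)
    rw [Real.norm_eq_abs, abs_mul, abs_of_nonneg (Real.exp_nonneg _)]
    have b1 : |(-u - κ * φ x)| ≤ u + κ := by
      rw [abs_le]
      have := phi_nonneg hx.le; have := phi_le_one hx.le
      constructor <;> nlinarith
    calc |(-u - κ * φ x)| * h x ≤ (u + κ) * h x :=
          mul_le_mul_of_nonneg_right b1 (Real.exp_nonneg _)
      _ ≤ (u + κ) * Real.exp (-u * x) := by
          apply mul_le_mul_of_nonneg_left _ (by linarith)
          rw [neg_mul]; exact integrand_le hκ.le hx.le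
  have hcont0 : ContinuousWithinAt h (Ici 0) 0 := (integrand_continuousOn κ u) 0 self_mem_Ici
  have key1 : ∫ x in Ioi (0:ℝ), (-u - κ * φ x) * h x = 0 - h 0 :=
    integral_Ioi_of_hasDerivAt_of_tendsto hcont0 hderiv hint_d htop
  have h00 : h 0 = 1 := by simp [hh, FF]
  rw [h00] at key1
  -- split the integral
  have hsplit : ∫ x in Ioi (0:ℝ), (-u - κ * φ x) * h x
      = -u * (∫ x in Ioi (0:ℝ), h x) - κ * ∫ x in Ioi (0:ℝ), φ x * h x := by
    have : ∀ x : ℝ, (-u - κ * φ x) * h x = -u * h x - κ * (φ x * h x) := fun x => by ring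
    simp_rw [this]
    rw [integral_sub (hint_h.const_mul (-u)) (hint_φh.const_mul κ),
      integral_const_mul, integral_const_mul]
  rw [hsplit] at key1
  -- Fubini for the second integral
  have hint2 : Integrable (Function.uncurry fun t x => Real.exp (-(t*x) - κ * FF x))
      ((volume.restrict (Ioc u (u+1))).prod (volume.restrict (Ioi (0:ℝ)))) := by
    have hmeasp : AEStronglyMeasurable (fun z : ℝ × ℝ => Real.exp (-(z.1 * z.2) - κ * FF z.2))
        ((volume.restrict (Ioc u (u+1))).prod (volume.restrict (Ioi (0:ℝ)))) := by
      rw [Measure.prod_restrict]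
      apply ContinuousOn.aestronglyMeasurable _ (measurableSet_Ioc.prod measurableSet_Ioi)
      apply Real.continuous_exp.comp_continuousOn
      apply ContinuousOn.sub ((continuous_fst.mul continuous_snd).neg.continuousOn)
      apply ContinuousOn.const_smul _ κ
      exact FF_continuousOn.comp continuous_snd.continuousOn (fun p hp => mem_Ici.2 (le_of_lt hp.2))
    apply Integrable.mono' (g := fun z : ℝ × ℝ => (1:ℝ) * Real.exp (-u * z.2)) _ hmeasp
    · rw [Measure.prod_restrict]
      filter_upwards [ae_restrict_mem (measurableSet_Ioc.prod measurableSet_Ioi)] with z hz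
      rw [Real.norm_eq_abs, abs_of_nonneg (Real.exp_nonneg _), one_mul, neg_mul]
      calc Real.exp (-(z.1 * z.2) - κ * FF z.2) ≤ Real.exp (-(z.1 * z.2)) :=
            integrand_le hκ.le (le_of_lt hz.2)
        _ ≤ Real.exp (-(u * z.2)) := by
            apply Real.exp_le_exp.2
            have : u * z.2 ≤ z.1 * z.2 := mul_le_mul_of_nonneg_right hz.1.1.le hz.2.le
            linarith
    · have h1 : Integrable (fun _ : ℝ => (1:ℝ)) (volume.restrict (Ioc u (u+1))) := by
        rw [integrable_const_iff]; right
        simp [isFiniteMeasure_restrict, Real.volume_Ioc]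
      exact MeasureTheory.Integrable.mul_prod h1 (exp_neg_integrableOn_Ioi 0 hu)
  have hfub : ∫ x in Ioi (0:ℝ), φ x * h x = ∫ t in u..(u+1), qkstar' κ t := by
    rw [intervalIntegral.integral_of_le (by linarith : u ≤ u + 1)]
    have hqk : ∀ t, qkstar' κ t = ∫ x in Ioi (0:ℝ), Real.exp (-(t*x) - κ * FF x) := fun t => rfl
    simp_rw [hqk]
    rw [MeasureTheory.integral_integral_swap hint2]
    apply setIntegral_congr_fun measurableSet_Ioi
    intro x hx
    have hx' : (0:ℝ) < x := hx
    show φ x * h x = ∫ t in Ioc u (u+1), Real.exp (-(t * x) - κ * FF x)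
    rw [← intervalIntegral.integral_of_le (by linarith : u ≤ u + 1)]
    have e2 : ∀ t : ℝ, Real.exp (-(t*x) - κ * FF x)
        = Real.exp (-(t*x)) * Real.exp (-(κ * FF x)) := by
      intro t; rw [← Real.exp_add]; ring_nf
    simp_rw [e2]
    rw [intervalIntegral.integral_mul_const, exp_interval_int hx']
    have e1 : Real.exp (-((u+1)*x)) = Real.exp (-(u*x)) * Real.exp (-x) := by
      rw [← Real.exp_add]; ring_nf
    rw [e1, hφ, hh]
    have e3 : Real.exp (-(u * x) - κ * FF x)
        = Real.exp (-(u*x)) * Real.exp (-(κ * FF x)) := by rw [← Real.exp_add]; ring_nf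
    simp only
    rw [e3]
    field_simp
  rw [hfub] at key1
  have : qkstar' κ u = ∫ x in Ioi (0:ℝ), h x := rfl
  rw [this]
  linarith

section SolutionSide

variable {κ : ℝ} {q : ℝ → ℝ}

lemma q_contOn (hdiff : ∀ u : ℝ, 0 < u → DifferentiableAt ℝ q u) :
    ContinuousOn q (Ioi 0) :=
  fun u hu => ((hdiff u hu).continuousAt).continuousWithinAt

lemma q_intInt (hdiff : ∀ u : ℝ, 0 < u → DifferentiableAt ℝ q u)
    {a b : ℝ} (ha : 0 < a) (hb : 0 < b) : IntervalIntegrable q volume a b := by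
  apply ContinuousOn.intervalIntegrable
  apply (q_contOn hdiff).mono
  intro z hz
  exact lt_of_lt_of_le (lt_min ha hb) hz.1

lemma G_hasDeriv (hdiff : ∀ u : ℝ, 0 < u → DifferentiableAt ℝ q u)
    {w : ℝ} (hw : 0 < w) :
    HasDerivAt (fun y => ∫ t in y..(y+1), q t) (q (w+1) - q w) w := by
  set c := w/2 with hc
  have hc0 : 0 < c := by positivity
  have hK : ∀ z, 0 < z → HasDerivAt (fun y => ∫ t in c..y, q t) (q z) z := by
    intro z hz
    apply intervalIntegral.integral_hasDerivAt_right (q_intInt hdiff hc0 hz)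
      ((q_contOn hdiff).stronglyMeasurableAtFilter isOpen_Ioi z hz)
      (hdiff z hz).continuousAt
  have H1 : HasDerivAt (fun y : ℝ => ∫ t in c..(y+1), q t) (q (w+1)) w := by
    have := (hK (w+1) (by linarith)).comp w ((hasDerivAt_id w).add_const 1)
    exact this.congr_deriv (by ring)
  have H2 : HasDerivAt (fun y : ℝ => ∫ t in c..y, q t) (q w) w := hK w hw
  have he : (fun y => ∫ t in y..(y+1), q t)
      =ᶠ[nhds w] (fun y => (∫ t in c..(y+1), q t) - ∫ t in c..y, q t) := by
    filter_upwards [Ioi_mem_nhds (show c < w by rw [hc]; linarith)] with y hy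
    have hy0 : (0:ℝ) < y := lt_trans hc0 hy
    have := intervalIntegral.integral_add_adjacent_intervals (a := c) (b := y) (c := y+1)
      (q_intInt hdiff hc0 hy0) (q_intInt hdiff hy0 (by linarith))
    linarith
  exact (H1.sub H2).congr_of_eventuallyEq he

lemma Eq_hasDeriv (hκ : 0 < κ)
    (hdiff : ∀ u : ℝ, 0 < u → DifferentiableAt ℝ q u)
    (heq : ∀ u : ℝ, 0 < u → u * deriv q u = (κ - 1) * q u - κ * q (u + 1))
    {w : ℝ} (hw : 0 < w) :
    HasDerivAt (fun y => y * q y + κ * ∫ t in y..(y+1), q t) 0 w := by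
  have h1 : HasDerivAt (fun y => y * q y) (q w + w * deriv q w) w := by
    have := (hasDerivAt_id w).mul ((hdiff w hw).hasDerivAt)
    exact this.congr_deriv (by simp)
  have h2 := (G_hasDeriv hdiff hw).const_mul κ
  have := h1.add h2
  exact this.congr_deriv (by linarith [heq w hw])

lemma Eq_const (hκ : 0 < κ)
    (hdiff : ∀ u : ℝ, 0 < u → DifferentiableAt ℝ q u)
    (heq : ∀ u : ℝ, 0 < u → u * deriv q u = (κ - 1) * q u - κ * q (u + 1))
    {x y : ℝ} (hx : 0 < x) (hy : 0 < y) :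
    x * q x + κ * ∫ t in x..(x+1), q t = y * q y + κ * ∫ t in y..(y+1), q t := by
  set E := fun y : ℝ => y * q y + κ * ∫ t in y..(y+1), q t
  have main : ∀ a b : ℝ, 0 < a → a ≤ b → E a = E b := by
    intro a b ha hab
    have hcont : ContinuousOn E (Icc a b) := by
      intro z hz
      exact ((Eq_hasDeriv hκ hdiff heq (lt_of_lt_of_le ha hz.1)).continuousAt).continuousWithinAt
    have := constant_of_has_deriv_right_zero hcont
      (fun z hz => (Eq_hasDeriv hκ hdiff heq (lt_of_lt_of_le ha hz.1)).hasDerivWithinAt)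
      b (right_mem_Icc.2 hab)
    exact this.symm
  rcases le_total x y with h | h
  · exact main x y hx h
  · exact (main y x hy h).symm

end SolutionSide

theorem stmt8 (κ : ℝ) (hκ : 0 < κ) (q : ℝ → ℝ)
    (hdiff : ∀ u : ℝ, 0 < u → DifferentiableAt ℝ q u)
    (heq : ∀ u : ℝ, 0 < u → u * deriv q u = (κ - 1) * q u - κ * q (u + 1))
    (hnp : ∀ A : ℝ, ∃ u : ℝ, 0 < u ∧ q u ≠ A * qkstar κ u) :
    ∀ lam : ℝ, 0 < lam → ∀ B : ℝ, 0 < B → ∀ u₀ : ℝ, 0 < u₀ →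
      ∃ u : ℝ, u₀ ≤ u ∧ B * Real.exp (lam * u) < |q u| := by
  intro lam hlam B hB u₀ hu₀
  by_contra hcon
  push_neg at hcon
  have hqk_eq : qkstar κ = qkstar' κ := rfl
  set A : ℝ := 1 * q 1 + κ * ∫ t in (1:ℝ)..(1+1), q t with hA
  set g : ℝ → ℝ := fun u => q u - A * qkstar' κ u with hg
  have hgrel : ∀ u : ℝ, 0 < u → u * g u = -(κ * ∫ t in u..(u+1), g t) := by
    intro u hu
    have h1 : u * q u + κ * ∫ t in u..(u+1), q t = A := Eq_const hκ hdiff heq hu one_pos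
    have h2 : u * qkstar' κ u + κ * ∫ t in u..(u+1), qkstar' κ t = 1 := qk_key hκ hu
    have hint_q : IntervalIntegrable q volume u (u+1) := q_intInt hdiff hu (by linarith)
    have hint_k : IntervalIntegrable (fun t => qkstar' κ t) volume u (u+1) := by
      apply ContinuousOn.intervalIntegrable
      intro z hz
      have hz0 : 0 < z := lt_of_lt_of_le (lt_min hu (by linarith)) hz.1
      exact (qkstar'_continuousAt hκ hz0).continuousWithinAt
    have h3 : ∫ t in u..(u+1), g t
        = (∫ t in u..(u+1), q t) - A * ∫ t in u..(u+1), qkstar' κ t := by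
      rw [hg]
      rw [intervalIntegral.integral_sub hint_q (hint_k.const_mul A),
        intervalIntegral.integral_const_mul]
    rw [hg, h3]
    simp only
    linear_combination h1 - A * h2
  have hgcont : ContinuousOn g (Ioi 0) := by
    intro z hz
    exact (((hdiff z hz).continuousAt).sub
      (continuousAt_const.mul (qkstar'_continuousAt hκ hz))).continuousWithinAt
  have hgint : ∀ a b : ℝ, 0 < a → 0 < b → IntervalIntegrable (fun t => |g t|) volume a b := by
    intro a b ha hb
    apply ContinuousOn.intervalIntegrable
    apply ContinuousOn.abs
    apply hgcont.mono
    intro z hz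
    exact lt_of_lt_of_le (lt_min ha hb) hz.1
  have habs : ∀ u : ℝ, 0 < u → u * |g u| ≤ κ * ∫ t in u..(u+1), |g t| := by
    intro u hu
    have h := hgrel u hu
    have e1 : u * |g u| = |u * g u| := by
      rw [abs_mul, abs_of_pos hu]
    rw [e1, h, abs_neg, abs_mul, abs_of_pos hκ]
    apply mul_le_mul_of_nonneg_left _ hκ.le
    exact intervalIntegral.abs_integral_le_integral_abs (by linarith)
  set u₁ : ℝ := max u₀ 1 with hu₁
  have hu₁0 : (0:ℝ) < u₁ := lt_of_lt_of_le one_pos (le_max_right _ _)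
  set C : ℝ := B + |A| * qkstar' κ 1 with hC
  have hC0 : 0 < C := by
    have := qkstar'_nonneg κ 1
    have := abs_nonneg A
    nlinarith
  have hCb : ∀ u, u₁ ≤ u → |g u| ≤ C * Real.exp (lam * u) := by
    intro u hu
    have hu01 : u₀ ≤ u := le_trans (le_max_left _ _) hu
    have hu1 : (1:ℝ) ≤ u := le_trans (le_max_right _ _) hu
    have h1 : |g u| ≤ |q u| + |A| * qkstar' κ u := by
      rw [hg]
      refine le_trans (abs_sub _ _) ?_
      rw [abs_mul, abs_of_nonneg (qkstar'_nonneg κ u)]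
    have h2 : |q u| ≤ B * Real.exp (lam * u) := hcon u hu01
    have h3 : qkstar' κ u ≤ qkstar' κ 1 := qkstar'_anti hκ one_pos hu1
    have h4 : (1:ℝ) ≤ Real.exp (lam * u) := by
      rw [Real.one_le_exp_iff]
      positivity
    have h5 : |A| * qkstar' κ u ≤ |A| * qkstar' κ 1 * Real.exp (lam * u) := by
      calc |A| * qkstar' κ u ≤ |A| * qkstar' κ 1 :=
            mul_le_mul_of_nonneg_left h3 (abs_nonneg A)
        _ ≤ |A| * qkstar' κ 1 * Real.exp (lam * u) :=
            le_mul_of_one_le_right (mul_nonneg (abs_nonneg A) (qkstar'_nonneg κ 1)) h4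
    rw [hC]
    nlinarith
  have hiter : ∀ n : ℕ, ∀ u, u₁ ≤ u → |g u| ≤ C * Real.exp (lam * (u + n)) * (κ/u)^n := by
    intro n
    induction n with
    | zero => intro u hu; simpa using hCb u hu
    | succ n ih =>
      intro u hu
      have hu0 : 0 < u := lt_of_lt_of_le hu₁0 hu
      have hstep : ∫ t in u..(u+1), |g t| ≤ C * Real.exp (lam * (u + 1 + n)) * (κ/u)^n := by
        have hmono := intervalIntegral.integral_mono_on (by linarith : u ≤ u + 1)
          (hgint u (u+1) hu0 (by linarith)) intervalIntegrable_const
          (f := fun t => |g t|) (g := fun _ => C * Real.exp (lam * (u + 1 + n)) * (κ/u)^n) ?_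
        · simpa using hmono
        · intro t ht
          have ht1 : u₁ ≤ t := le_trans hu ht.1
          have ht0 : 0 < t := lt_of_lt_of_le hu₁0 ht1
          show |g t| ≤ C * Real.exp (lam * (u + 1 + n)) * (κ/u)^n
          refine le_trans (ih t ht1) ?_
          have e1 : Real.exp (lam * (t + n)) ≤ Real.exp (lam * (u + 1 + n)) := by
            apply Real.exp_le_exp.2
            have := ht.2
            nlinarith
          have e2 : (κ/t)^n ≤ (κ/u)^n := by
            apply pow_le_pow_left₀ (by positivity)
            apply div_le_div_of_nonneg_left hκ.le hu0 ht.1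
          have e3 : (0:ℝ) ≤ (κ/t)^n := by positivity
          exact mul_le_mul (mul_le_mul_of_nonneg_left e1 hC0.le) e2 e3 (by positivity)
      have h1 : u * |g u| ≤ κ * (C * Real.exp (lam * (u + 1 + n)) * (κ/u)^n) :=
        le_trans (habs u hu0) (mul_le_mul_of_nonneg_left hstep hκ.le)
      have h2 : |g u| ≤ κ * (C * Real.exp (lam * (u + 1 + n)) * (κ/u)^n) / u := by
        rw [le_div_iff₀ hu0]
        linarith [h1, mul_comm (|g u|) u]
      refine le_trans h2 (le_of_eq ?_)
      have : Real.exp (lam * (u + 1 + n)) = Real.exp (lam * (u + (n+1 : ℕ))) := by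
        congr 1
        push_cast
        ring
      rw [this, pow_succ]
      field_simp
  set v : ℝ := max u₁ (2 * κ * Real.exp lam) with hv
  have hv0 : 0 < v := lt_of_lt_of_le hu₁0 (le_max_left _ _)
  have hfar : ∀ u, v ≤ u → g u = 0 := by
    intro u hu
    have hu1 : u₁ ≤ u := le_trans (le_max_left _ _) hu
    have hu0 : 0 < u := lt_of_lt_of_le hu₁0 hu1
    have hhalf : κ * Real.exp lam / u ≤ 1/2 := by
      rw [div_le_iff₀ hu0]
      have : 2 * κ * Real.exp lam ≤ u := le_trans (le_max_right _ _) hu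
      linarith
    have hbase0 : 0 ≤ κ * Real.exp lam / u := by positivity
    have hbnd : ∀ n : ℕ, |g u| ≤ (C * Real.exp (lam * u)) * (1/2:ℝ)^n := by
      intro n
      refine le_trans (hiter n u hu1) ?_
      have e0 : C * Real.exp (lam * (u + n)) * (κ/u)^n
          = (C * Real.exp (lam * u)) * (κ * Real.exp lam / u)^n := by
        rw [mul_add, Real.exp_add, mul_comm lam (n:ℝ), Real.exp_nat_mul]
        rw [show κ * Real.exp lam / u = (κ/u) * Real.exp lam by ring, mul_pow]
        ring
      rw [e0]
      apply mul_le_mul_of_nonneg_left (pow_le_pow_left₀ hbase0 hhalf n) (by positivity)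
    have ht : Tendsto (fun n : ℕ => (C * Real.exp (lam * u)) * (1/2:ℝ)^n) atTop (𝓝 0) := by
      have h2 := tendsto_pow_atTop_nhds_zero_of_lt_one (by norm_num : (0:ℝ) ≤ 1/2)
        (by norm_num : (1/2:ℝ) < 1)
      simpa using h2.const_mul (C * Real.exp (lam * u))
    have : |g u| ≤ 0 := ge_of_tendsto ht (Eventually.of_forall hbnd)
    exact abs_eq_zero.1 (le_antisymm this (abs_nonneg _))
  have hzero : ∀ w, 0 < w → g w = 0 := by
    intro w hw
    rcases le_or_gt v w with hcase | hcase
    · exact hfar w hcase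
    set ε : ℝ := w/2 with hε
    have hε0 : 0 < ε := by positivity
    have hεw : ε < w := by rw [hε]; linarith
    have hεv : ε < v := lt_trans hεw hcase
    set K : ℝ := κ / ε with hK
    set φf : ℝ → ℝ := fun x => ∫ t in x..v, |g t| with hφf
    have hφd : ∀ x, 0 < x → HasDerivAt φf (-|g x|) x := by
      intro x hx
      have he : φf = fun x => -(∫ t in v..x, |g t|) := by
        funext y
        rw [hφf]
        exact intervalIntegral.integral_symm v y
      rw [he]
      apply HasDerivAt.neg
      apply intervalIntegral.integral_hasDerivAt_right (hgint v x hv0 hx)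
        ((hgcont.abs).stronglyMeasurableAtFilter isOpen_Ioi x hx)
      exact (hgcont.continuousAt (Ioi_mem_nhds hx)).abs
    have hφ0 : ∀ x, x ≤ v → 0 ≤ φf x :=
      fun x hxv => intervalIntegral.integral_nonneg hxv (fun t _ => abs_nonneg _)
    have hkey : ∀ x, ε ≤ x → x ≤ v → |g x| ≤ K * φf x := by
      intro x hx hxv
      have hx0 : 0 < x := lt_of_lt_of_le hε0 hx
      have h1 : x * |g x| ≤ κ * ∫ t in x..(x+1), |g t| := habs x hx0
      have h2 : ∫ t in x..(x+1), |g t| ≤ φf x := by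
        rcases le_or_gt (x+1) v with hc | hc
        · apply intervalIntegral.integral_mono_interval le_rfl (by linarith : x ≤ x+1) hc
          · filter_upwards with t; exact abs_nonneg _
          · exact hgint x v hx0 hv0
        · have hsplit := intervalIntegral.integral_add_adjacent_intervals
            (a := x) (b := v) (c := x+1)
            (hgint x v hx0 hv0) (hgint v (x+1) hv0 (by linarith))
          have hzero2 : (∫ t in v..(x+1), |g t|) = 0 := by
            have heqz : EqOn (fun t => |g t|) (fun _ => (0:ℝ)) (uIcc v (x+1)) := by
              intro t ht
              rw [uIcc_of_le (by linarith : v ≤ x+1)] at ht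
              simp [hfar t ht.1]
            rw [intervalIntegral.integral_congr heqz]
            simp
          rw [hφf]
          simp only
          linarith
      have h3 : x * |g x| ≤ κ * φf x := le_trans h1 (mul_le_mul_of_nonneg_left h2 hκ.le)
      have h4 : |g x| ≤ κ * φf x / x := by
        rw [le_div_iff₀ hx0]
        linarith [mul_comm (|g x|) x]
      refine le_trans h4 ?_
      rw [hK, div_mul_eq_mul_div]
      exact div_le_div_of_nonneg_left (mul_nonneg hκ.le (hφ0 x hxv)) hε0 hx
    set ψ : ℝ → ℝ := fun x => Real.exp (K*x) * φf x with hψ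
    have hψd : ∀ x, 0 < x → HasDerivAt ψ (Real.exp (K*x) * (K * φf x - |g x|)) x := by
      intro x hx
      have h1 : HasDerivAt (fun x : ℝ => Real.exp (K*x)) (K * Real.exp (K*x)) x := by
        simpa [mul_comm] using ((hasDerivAt_id x).const_mul K).exp
      have := h1.mul (hφd x hx)
      exact this.congr_deriv (by ring)
    have hmono : MonotoneOn ψ (Icc ε v) := by
      apply monotoneOn_of_deriv_nonneg (convex_Icc ε v)
      · intro z hz
        exact ((hψd z (lt_of_lt_of_le hε0 hz.1)).continuousAt).continuousWithinAt
      · intro z hz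
        rw [interior_Icc] at hz
        exact ((hψd z (lt_of_lt_of_le hε0 hz.1.le)).differentiableAt).differentiableWithinAt
      · intro z hz
        rw [interior_Icc] at hz
        have hz0 : 0 < z := lt_of_lt_of_le hε0 hz.1.le
        rw [(hψd z hz0).deriv]
        have := hkey z hz.1.le hz.2.le
        have := Real.exp_pos (K*z)
        nlinarith
    have hψv : ψ v = 0 := by
      rw [hψ, hφf]
      simp [intervalIntegral.integral_same]
    have hφw : φf w = 0 := by
      have hεv' : ε ≤ v := le_of_lt hεv
      have h1 := hmono (Set.mem_Icc.2 ⟨le_of_lt hεw, le_of_lt hcase⟩)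
        (Set.mem_Icc.2 ⟨hεv', le_rfl⟩) (le_of_lt hcase)
      rw [hψv] at h1
      have h2 : 0 ≤ φf w := hφ0 w (le_of_lt hcase)
      have h3 := Real.exp_pos (K*w)
      rw [hψ] at h1
      simp only at h1
      nlinarith
    have := hkey w (le_of_lt hεw) (le_of_lt hcase)
    rw [hφw] at this
    simp only [mul_zero] at this
    exact abs_eq_zero.1 (le_antisymm this (abs_nonneg _))
  obtain ⟨u, hu, hne⟩ := hnp A
  apply hne
  have h := hzero u hu
  rw [hg] at h
  simp only at h
  rw [hqk_eq]
  linarith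
end

section
/- Suppose q : ℝ → ℂ solves (E+). Let c ≥ 0 be real and let p : ℝ → ℂ be continuous on (c, ∞), such that the function u ↦ u·p(u) is differentiable at every u > c + v_m with (u p(u))′ = −Σ_{j=0}^m α_j p(u − v_j) for all u > c + v_m. Then there exists a complex number A such that for all u > c + v_m: u·p(u)·q(u) = A + Σ_{j=1}^m α_j ∫_{u − v_j}^u p(t)·q(t + v_j) dt. -/
open MeasureTheory Filter Set Topology

/-- `q : ℝ → ℂ` solves the advanced-argument equation (E+):
`q` is differentiable at every `u > 0` and
`u·q′(u) = ∑_{j=0}^m α_j q(u + v_j)` for all `u > 0`. -/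
def SolvesEplus (m : ℕ) (v : ℕ → ℝ) (α : ℕ → ℂ) (q : ℝ → ℂ) : Prop :=
  ∀ u : ℝ, 0 < u → DifferentiableAt ℝ q u ∧
    (u : ℂ) * deriv q u = ∑ j ∈ Finset.range (m + 1), α j * q (u + v j)

theorem stmt10 (m : ℕ) (v : ℕ → ℝ) (α : ℕ → ℂ)
    (hv0 : v 0 = 0) (hv : ∀ i, i < m → v i < v (i + 1))
    (hα : ∀ j, 1 ≤ j → j ≤ m → α j ≠ 0)
    (q : ℝ → ℂ) (hq : SolvesEplus m v α q)
    (c : ℝ) (hc : 0 ≤ c) (p : ℝ → ℂ)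
    (hpcont : ContinuousOn p (Set.Ioi c))
    (hpdiff : ∀ u : ℝ, c + v m < u → DifferentiableAt ℝ (fun x : ℝ => (x : ℂ) * p x) u)
    (hpeq : ∀ u : ℝ, c + v m < u →
      deriv (fun x : ℝ => (x : ℂ) * p x) u = -∑ j ∈ Finset.range (m + 1), α j * p (u - v j)) :
    ∃ A : ℂ, ∀ u : ℝ, c + v m < u →
      (u : ℂ) * p u * q u = A + ∑ j ∈ Finset.Icc 1 m,
        α j * ∫ t in (u - v j)..u, p t * q (t + v j) := by
  -- monotonicity facts
  have hmono : ∀ i j : ℕ, i ≤ j → j ≤ m → v i ≤ v j := by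
    intro i j hij hjm
    induction hij with
    | refl => exact le_rfl
    | @step n h ih =>
      exact (ih (by omega)).trans (hv n (by omega)).le
  have hv0le : ∀ j, j ≤ m → 0 ≤ v j := fun j hj => hv0 ▸ hmono 0 j (Nat.zero_le j) hj
  have hvm : 0 ≤ v m := hv0le m le_rfl
  set f : ℕ → ℝ → ℂ := fun j t => p t * q (t + v j) with hfdef
  have hqc : ContinuousOn q (Ioi 0) := fun x hx =>
    ((hq x hx).1.continuousAt).continuousWithinAt
  have hfc : ∀ j, j ≤ m → ContinuousOn (f j) (Ioi c) := by
    intro j hj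
    apply hpcont.mul
    apply hqc.comp ((continuous_id.add continuous_const).continuousOn)
    intro t ht
    have : 0 ≤ v j := hv0le j hj
    simp only [mem_Ioi, id_eq, Pi.add_apply] at *
    linarith
  have hint : ∀ j, j ≤ m → ∀ a b : ℝ, c < a → c < b → IntervalIntegrable (f j) volume a b := by
    intro j hj a b ha hb
    apply ((hfc j hj).mono ?_).intervalIntegrable
    intro t ht
    exact lt_of_lt_of_le (lt_min ha hb) ht.1
  have hmeas : ∀ j, j ≤ m → ∀ x : ℝ, c < x → StronglyMeasurableAtFilter (f j) (𝓝 x) volume :=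
    fun j hj x hx => (hfc j hj).stronglyMeasurableAtFilter isOpen_Ioi x hx
  have hfcont : ∀ j, j ≤ m → ∀ x : ℝ, c < x → ContinuousAt (f j) x :=
    fun j hj x hx => (hfc j hj).continuousAt (isOpen_Ioi.mem_nhds hx)
  set G : ℕ → ℝ → ℂ := fun j x => ∫ t in (x - v j)..x, f j t with hGdef
  set a0 : ℝ := c + v m + 1 with ha0def
  have ha0 : c < a0 := by simp only [ha0def]; linarith
  have hGderiv : ∀ j, j ≤ m → ∀ u : ℝ, c + v m < u →
      HasDerivAt (G j) (f j u - f j (u - v j)) u := by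
    intro j hj u hu
    have huc : c < u := by linarith
    have huj : c < u - v j := by
      have := hmono j m hj le_rfl; linarith
    have h1 : HasDerivAt (fun x => ∫ t in a0..x, f j t) (f j u) u :=
      intervalIntegral.integral_hasDerivAt_right (hint j hj a0 u ha0 huc)
        (hmeas j hj u huc) (hfcont j hj u huc)
    have h2 : HasDerivAt (fun x : ℝ => ∫ t in a0..(x - v j), f j t) (f j (u - v j)) u := by
      have outer : HasDerivAt (fun y => ∫ t in a0..y, f j t) (f j (u - v j)) (u - v j) :=
        intervalIntegral.integral_hasDerivAt_right (hint j hj a0 _ ha0 huj)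
          (hmeas j hj _ huj) (hfcont j hj _ huj)
      exact outer.comp_sub_const u (v j)
    have heq : (fun x : ℝ => (∫ t in a0..x, f j t) - ∫ t in a0..(x - v j), f j t)
        =ᶠ[𝓝 u] G j := by
      filter_upwards [isOpen_Ioi.mem_nhds (show u ∈ Ioi (c + v m) from hu)] with x hx
      have hxc : c < x := by simp only [mem_Ioi] at hx; linarith
      have hxj : c < x - v j := by
        have := hmono j m hj le_rfl
        simp only [mem_Ioi] at hx; linarith
      rw [intervalIntegral.integral_interval_sub_left (hint j hj a0 x ha0 hxc)
        (hint j hj a0 (x - v j) ha0 hxj)]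
    exact (h1.sub h2).congr_of_eventuallyEq heq.symm
  set F : ℝ → ℂ := fun x => (x : ℂ) * p x * q x - ∑ j ∈ Finset.Icc 1 m, α j * G j x
    with hFdef
  have hFderiv : ∀ u : ℝ, c + v m < u → HasDerivAt F 0 u := by
    intro u hu
    have hu0 : (0:ℝ) < u := by linarith
    have hq' := hq u hu0
    have h1 : HasDerivAt (fun x : ℝ => (x : ℂ) * p x)
        (-∑ j ∈ Finset.range (m + 1), α j * p (u - v j)) u := by
      have := (hpdiff u hu).hasDerivAt
      rwa [hpeq u hu] at this
    have hpq : HasDerivAt (fun x : ℝ => (x : ℂ) * p x * q x)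
        ((-∑ j ∈ Finset.range (m + 1), α j * p (u - v j)) * q u
          + ((u : ℂ) * p u) * deriv q u) u :=
      h1.mul hq'.1.hasDerivAt
    have hsum : HasDerivAt (fun x => ∑ j ∈ Finset.Icc 1 m, α j * G j x)
        (∑ j ∈ Finset.Icc 1 m, α j * (f j u - f j (u - v j))) u := by
      apply HasDerivAt.fun_sum
      intro j hj
      exact (hGderiv j (Finset.mem_Icc.mp hj).2 u hu).const_mul (α j)
    have hF := hpq.sub hsum
    refine hF.congr_deriv (Eq.symm ?_)
    have hq2 : ((u : ℂ) * p u) * deriv q u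
        = p u * ∑ j ∈ Finset.range (m + 1), α j * q (u + v j) := by
      rw [mul_comm (u : ℂ) (p u), mul_assoc, hq'.2]
    rw [hq2]
    have hsplit : ∀ g : ℕ → ℂ,
        ∑ j ∈ Finset.range (m + 1), g j = g 0 + ∑ j ∈ Finset.Icc 1 m, g j := by
      intro g
      have h : Finset.range (m + 1) = insert 0 (Finset.Icc 1 m) := by
        ext x
        simp only [Finset.mem_range, Finset.mem_insert, Finset.mem_Icc]
        omega
      rw [h, Finset.sum_insert (by simp)]
    rw [hsplit, hsplit]
    have hfval : ∀ j, f j u - f j (u - v j)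
        = p u * q (u + v j) - p (u - v j) * q u := by
      intro j
      simp only [hfdef, sub_add_cancel]
    simp only [hfval, hv0, sub_zero, add_zero]
    have hcomb : ∑ j ∈ Finset.Icc 1 m,
        (p u * (α j * q (u + v j)) - α j * p (u - v j) * q u
          - α j * (p u * q (u + v j) - p (u - v j) * q u))
        = p u * (∑ j ∈ Finset.Icc 1 m, α j * q (u + v j))
          - (∑ j ∈ Finset.Icc 1 m, α j * p (u - v j)) * q u
          - ∑ j ∈ Finset.Icc 1 m, α j * (p u * q (u + v j) - p (u - v j) * q u) := by
      rw [Finset.sum_sub_distrib, Finset.sum_sub_distrib, Finset.mul_sum, Finset.sum_mul]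
    have hzero : ∑ j ∈ Finset.Icc 1 m,
        (p u * (α j * q (u + v j)) - α j * p (u - v j) * q u
          - α j * (p u * q (u + v j) - p (u - v j) * q u)) = 0 :=
      Finset.sum_eq_zero fun j _ => by ring
    rw [hcomb] at hzero
    linear_combination -hzero
  -- conclude F is constant
  refine ⟨F a0, fun u hu => ?_⟩
  have ha0' : a0 ∈ Ioi (c + v m) := by simp only [ha0def, mem_Ioi]; linarith
  have hconst : F u = F a0 := by
    apply (convex_Ioi (c + v m)).is_const_of_fderivWithin_eq_zero (𝕜 := ℝ)
      (f := F) ?_ ?_ hu ha0'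
    · intro x hx
      exact ((hFderiv x hx).differentiableAt).differentiableWithinAt
    · intro x hx
      have hx' : c + v m < x := hx
      have h0 : HasFDerivAt F (0 : ℝ →L[ℝ] ℂ) x := by
        have := (hFderiv x hx').hasFDerivAt
        simpa using this
      rw [fderivWithin_of_isOpen isOpen_Ioi hx, h0.fderiv]
  simp only [hFdef, hGdef, hfdef] at hconst
  linear_combination hconst
end

section
/- Assume m ≥ 1 and Re(a) < 1. Then there exists exactly one function p : ℝ → ℂ satisfying all of the following: p(u) = 0 for u ≤ 0; p(u) = (C_0/Γ(1−a))·u^{−a} for 0 < u ≤ v_1 (u^{−a} the complex power of the positive real u); p is continuous on (0, ∞); and u^a·p(u) = v_1^a·p(v_1) − ∫_{v_1}^u t^{a−1}·(Σ_{j=1}^m α_j p(t − v_j)) dt for all u ≥ v_1. -/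
open MeasureTheory Filter Set

/-- The constant `C₀ = ∏_{j=1}^m (v_j e^γ)^{−α_j}`, with `γ` Euler's constant. -/
noncomputable def Cnaught (m : ℕ) (v : ℕ → ℝ) (α : ℕ → ℂ) : ℂ :=
  ∏ j ∈ Finset.Icc 1 m,
    ((v j * Real.exp Real.eulerMascheroniConstant : ℝ) : ℂ) ^ (-α j)

/-- The characterization of the solution `p(·) = p(·, a, b)` of the adjoint delay
differential equation (case `Re a < 1`, with `a = 1 + α₀`):
it vanishes on `(−∞, 0]`, equals `(C₀/Γ(1−a))·u^{−a}` on `(0, v₁]`, is continuous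
on `(0, ∞)`, and satisfies the integrated form of the delay equation beyond `v₁`. -/
def IsAdjointP (m : ℕ) (v : ℕ → ℝ) (α : ℕ → ℂ) (p : ℝ → ℂ) : Prop :=
  (∀ u : ℝ, u ≤ 0 → p u = 0) ∧
  (∀ u : ℝ, 0 < u → u ≤ v 1 →
    p u = Cnaught m v α / Complex.Gamma (1 - (1 + α 0)) * (u : ℂ) ^ (-(1 + α 0))) ∧
  ContinuousOn p (Set.Ioi 0) ∧
  (∀ u : ℝ, v 1 ≤ u →
    (u : ℂ) ^ (1 + α 0) * p u = ((v 1 : ℝ) : ℂ) ^ (1 + α 0) * p (v 1) -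
      ∫ t in (v 1)..u, (t : ℂ) ^ ((1 + α 0) - 1) * ∑ j ∈ Finset.Icc 1 m, α j * p (t - v j))

namespace Stmt11Aux

open scoped Topology

/-- The constant `C₀ / Γ(1 - a)`. -/
noncomputable def cc (m : ℕ) (v : ℕ → ℝ) (α : ℕ → ℂ) : ℂ :=
  Cnaught m v α / Complex.Gamma (1 - (1 + α 0))

/-- One step of the integral recursion. -/
noncomputable def F (m : ℕ) (v : ℕ → ℝ) (α : ℕ → ℂ) (q : ℝ → ℂ) (u : ℝ) : ℂ :=
  if u ≤ 0 then 0
  else if u ≤ v 1 then cc m v α * (u : ℂ) ^ (-(1 + α 0))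
  else (u : ℂ) ^ (-(1 + α 0)) *
    (cc m v α - ∫ t in (v 1)..u, (t : ℂ) ^ ((1 + α 0) - 1) *
        ∑ j ∈ Finset.Icc 1 m, α j * q (t - v j))

/-- The solution, defined by iterating `F` sufficiently often starting from `0`. -/
noncomputable def pp (m : ℕ) (v : ℕ → ℝ) (α : ℕ → ℂ) (u : ℝ) : ℂ :=
  (F m v α)^[⌈u / v 1⌉₊ + 1] (fun _ => 0) u

/-- The integrand of the delay equation, built from `pp`. -/
noncomputable def gg (m : ℕ) (v : ℕ → ℝ) (α : ℕ → ℂ) (t : ℝ) : ℂ :=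
  (t : ℂ) ^ ((1 + α 0) - 1) * ∑ j ∈ Finset.Icc 1 m, α j * pp m v α (t - v j)

lemma cpow_mul_cpow_neg {x : ℝ} (hx : x ≠ 0) (w : ℂ) :
    (x : ℂ) ^ w * (x : ℂ) ^ (-w) = 1 := by
  rw [Complex.cpow_neg]
  apply mul_inv_cancel₀
  intro h
  exact Complex.ofReal_ne_zero.mpr hx ((Complex.cpow_eq_zero_iff _ _).mp h).1

lemma cpow_neg_mul_cpow {x : ℝ} (hx : x ≠ 0) (w : ℂ) :
    (x : ℂ) ^ (-w) * (x : ℂ) ^ w = 1 := by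
  rw [mul_comm]; exact cpow_mul_cpow_neg hx w

section

variable {m : ℕ} {v : ℕ → ℝ} {α : ℕ → ℂ}

lemma F_locality (hv1 : 0 < v 1) (hvj : ∀ j ∈ Finset.Icc 1 m, v 1 ≤ v j)
    {q₁ q₂ : ℝ → ℂ} {s : ℝ} (h : Set.EqOn q₁ q₂ (Set.Iic s)) :
    Set.EqOn (F m v α q₁) (F m v α q₂) (Set.Iic (s + v 1)) := by
  intro u hu
  simp only [Set.mem_Iic] at hu
  unfold F
  split_ifs with h1 h2
  · rfl
  · rfl
  · push_neg at h1 h2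
    congr 2
    apply intervalIntegral.integral_congr
    intro t ht
    rw [Set.uIcc_of_le h2.le] at ht
    dsimp only
    congr 1
    apply Finset.sum_congr rfl
    intro j hj
    congr 1
    apply h
    simp only [Set.mem_Iic]
    have hj' := hvj j hj
    have := ht.2
    linarith

lemma F_nonpos (q : ℝ → ℂ) {u : ℝ} (hu : u ≤ 0) : F m v α q u = 0 := by
  unfold F; rw [if_pos hu]

lemma eqOn_iter (hv1 : 0 < v 1) (hvj : ∀ j ∈ Finset.Icc 1 m, v 1 ≤ v j) (k : ℕ) :
    Set.EqOn ((F m v α)^[k] (fun _ => 0)) ((F m v α)^[k + 1] (fun _ => 0))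
      (Set.Iic ((k : ℝ) * v 1)) := by
  induction k with
  | zero =>
    intro u hu
    simp only [Set.mem_Iic, Nat.cast_zero, zero_mul] at hu
    rw [Function.iterate_zero, Function.iterate_succ_apply']
    exact (F_nonpos _ hu).symm
  | succ k ih =>
    have h2 : Set.EqOn ((F m v α)^[k + 1] (fun _ => 0)) ((F m v α)^[k + 1 + 1] (fun _ => 0))
        (Set.Iic ((k : ℝ) * v 1 + v 1)) := by
      rw [Function.iterate_succ_apply' (F m v α) k, Function.iterate_succ_apply' (F m v α) (k + 1)]
      exact F_locality hv1 hvj ih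
    intro u hu
    apply h2
    simp only [Set.mem_Iic] at hu ⊢
    push_cast at hu
    linarith

lemma eqOn_iter_le (hv1 : 0 < v 1) (hvj : ∀ j ∈ Finset.Icc 1 m, v 1 ≤ v j) {k l : ℕ}
    (hkl : k ≤ l) :
    Set.EqOn ((F m v α)^[k] (fun _ => 0)) ((F m v α)^[l] (fun _ => 0))
      (Set.Iic ((k : ℝ) * v 1)) := by
  induction l, hkl using Nat.le_induction with
  | base => exact fun u _ => rfl
  | succ l hkl ih =>
    intro u hu
    rw [ih hu]
    apply eqOn_iter hv1 hvj l
    simp only [Set.mem_Iic] at hu ⊢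
    have : (k : ℝ) ≤ l := Nat.cast_le.mpr hkl
    nlinarith

lemma le_ceil_mul (hv1 : 0 < v 1) (u : ℝ) : u ≤ ((⌈u / v 1⌉₊ + 1 : ℕ) : ℝ) * v 1 := by
  rcases le_or_gt u 0 with h | h
  · have : (0 : ℝ) < ((⌈u / v 1⌉₊ + 1 : ℕ) : ℝ) * v 1 := by positivity
    linarith
  · have h1 : u / v 1 ≤ (⌈u / v 1⌉₊ : ℝ) := Nat.le_ceil _
    have h2 : u ≤ (⌈u / v 1⌉₊ : ℝ) * v 1 := by
      rw [div_le_iff₀ hv1] at h1; exact h1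
    push_cast
    nlinarith

lemma pp_eq_iter (hv1 : 0 < v 1) (hvj : ∀ j ∈ Finset.Icc 1 m, v 1 ≤ v j) {u : ℝ} {K : ℕ}
    (hK : u ≤ (K : ℝ) * v 1) : pp m v α u = (F m v α)^[K] (fun _ => 0) u := by
  set N := ⌈u / v 1⌉₊ + 1 with hN
  have hNu : u ≤ (N : ℝ) * v 1 := le_ceil_mul hv1 u
  have h1 : pp m v α u = (F m v α)^[max N K] (fun _ => 0) u :=
    eqOn_iter_le hv1 hvj (le_max_left N K) hNu
  have h2 : (F m v α)^[K] (fun _ => 0) u = (F m v α)^[max N K] (fun _ => 0) u :=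
    eqOn_iter_le hv1 hvj (le_max_right N K) hK
  rw [h1, h2]

lemma pp_fixed (hv1 : 0 < v 1) (hvj : ∀ j ∈ Finset.Icc 1 m, v 1 ≤ v j) (u : ℝ) :
    pp m v α u = F m v α (pp m v α) u := by
  set K := ⌈u / v 1⌉₊ + 1 with hK
  have hKu : u ≤ (K : ℝ) * v 1 := le_ceil_mul hv1 u
  have hEq : Set.EqOn (pp m v α) ((F m v α)^[K] (fun _ => 0)) (Set.Iic ((K : ℝ) * v 1)) :=
    fun w hw => pp_eq_iter hv1 hvj hw
  have h1 : F m v α (pp m v α) u = F m v α ((F m v α)^[K] (fun _ => 0)) u := by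
    apply F_locality hv1 hvj hEq
    simp only [Set.mem_Iic]
    linarith
  rw [h1, ← Function.iterate_succ_apply' (F m v α) K, pp_eq_iter hv1 hvj hKu]
  exact eqOn_iter hv1 hvj K hKu

lemma pp_nonpos (hv1 : 0 < v 1) (hvj : ∀ j ∈ Finset.Icc 1 m, v 1 ≤ v j) {u : ℝ}
    (hu : u ≤ 0) : pp m v α u = 0 := by
  rw [pp_fixed hv1 hvj]; exact F_nonpos _ hu

lemma pp_base (hv1 : 0 < v 1) (hvj : ∀ j ∈ Finset.Icc 1 m, v 1 ≤ v j) {u : ℝ}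
    (h0 : 0 < u) (h1 : u ≤ v 1) :
    pp m v α u = cc m v α * (u : ℂ) ^ (-(1 + α 0)) := by
  rw [pp_fixed hv1 hvj]; unfold F; rw [if_neg (not_le.mpr h0), if_pos h1]

lemma pp_gt (hv1 : 0 < v 1) (hvj : ∀ j ∈ Finset.Icc 1 m, v 1 ≤ v j) {u : ℝ}
    (h1 : v 1 < u) :
    pp m v α u = (u : ℂ) ^ (-(1 + α 0)) *
      (cc m v α - ∫ t in (v 1)..u, gg m v α t) := by
  rw [pp_fixed hv1 hvj]; unfold F gg
  rw [if_neg (not_le.mpr (lt_trans hv1 h1)), if_neg (not_le.mpr h1)]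

lemma v1a_pp (hv1 : 0 < v 1) (hvj : ∀ j ∈ Finset.Icc 1 m, v 1 ≤ v j) :
    ((v 1 : ℝ) : ℂ) ^ (1 + α 0) * pp m v α (v 1) = cc m v α := by
  rw [pp_base hv1 hvj hv1 le_rfl, mul_comm (cc m v α), ← mul_assoc,
    cpow_mul_cpow_neg (ne_of_gt hv1), one_mul]

lemma pp_eq4 (hv1 : 0 < v 1) (hvj : ∀ j ∈ Finset.Icc 1 m, v 1 ≤ v j) {u : ℝ}
    (hu : v 1 ≤ u) :
    (u : ℂ) ^ (1 + α 0) * pp m v α u = cc m v α - ∫ t in (v 1)..u, gg m v α t := by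
  rcases eq_or_lt_of_le hu with h | h
  · rw [← h, intervalIntegral.integral_same, sub_zero]
    exact v1a_pp hv1 hvj
  · rw [pp_gt hv1 hvj h, ← mul_assoc, cpow_mul_cpow_neg (ne_of_gt (lt_trans hv1 h)), one_mul]

lemma gg_nonpos (hv1 : 0 < v 1) (hvj : ∀ j ∈ Finset.Icc 1 m, v 1 ≤ v j) {t : ℝ}
    (ht : t ≤ v 1) : gg m v α t = 0 := by
  unfold gg
  rw [Finset.sum_eq_zero, mul_zero]
  intro j hj
  rw [pp_nonpos hv1 hvj (by have := hvj j hj; linarith), mul_zero]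

lemma pp_int_zero (hv1 : 0 < v 1) (hvj : ∀ j ∈ Finset.Icc 1 m, v 1 ≤ v j) {x : ℝ}
    (hx : x ≤ 0) : IntervalIntegrable (pp m v α) volume x 0 := by
  rw [intervalIntegrable_iff]
  have h0 : IntegrableOn (fun _ : ℝ => (0 : ℂ)) (Set.uIoc x 0) volume := integrableOn_zero
  apply h0.congr_fun ?_ measurableSet_uIoc
  intro t ht
  rw [Set.uIoc_of_le hx] at ht
  exact (pp_nonpos hv1 hvj ht.2).symm

lemma pp_int_base (hv1 : 0 < v 1) (hvj : ∀ j ∈ Finset.Icc 1 m, v 1 ≤ v j)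
    (ha : (1 + α 0).re < 1) :
    IntervalIntegrable (pp m v α) volume 0 (v 1) := by
  have h1 : IntervalIntegrable (fun t : ℝ => cc m v α * (t : ℂ) ^ (-(1 + α 0)))
      volume 0 (v 1) :=
    (intervalIntegral.intervalIntegrable_cpow'
      (by rw [Complex.neg_re]; linarith)).const_mul _
  rw [intervalIntegrable_iff] at h1 ⊢
  apply h1.congr_fun ?_ measurableSet_uIoc
  intro t ht
  rw [Set.uIoc_of_le hv1.le] at ht
  exact (pp_base hv1 hvj ht.1 ht.2).symm

lemma pp_int_of (hv1 : 0 < v 1) (hvj : ∀ j ∈ Finset.Icc 1 m, v 1 ≤ v j) {c : ℝ}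
    (H : IntervalIntegrable (pp m v α) volume 0 c) (hc : 0 ≤ c) :
    ∀ x y : ℝ, x ≤ c → y ≤ c → IntervalIntegrable (pp m v α) volume x y := by
  have key : ∀ x : ℝ, x ≤ c → IntervalIntegrable (pp m v α) volume 0 x := by
    intro x hx
    rcases le_or_gt x 0 with h | h
    · exact (pp_int_zero hv1 hvj h).symm
    · apply H.mono_set
      rw [Set.uIcc_of_le h.le, Set.uIcc_of_le hc]
      exact Set.Icc_subset_Icc le_rfl hx
  exact fun x y hx hy => (key x hx).symm.trans (key y hy)

lemma gg_int (hv1 : 0 < v 1) (hvj : ∀ j ∈ Finset.Icc 1 m, v 1 ≤ v j) {b : ℝ}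
    (hb : v 1 ≤ b)
    (hpp : ∀ x y : ℝ, x ≤ b - v 1 → y ≤ b - v 1 → IntervalIntegrable (pp m v α) volume x y) :
    IntervalIntegrable (gg m v α) volume (v 1) b := by
  have hsum : gg m v α = ∑ j ∈ Finset.Icc 1 m,
      (fun t : ℝ => (t : ℂ) ^ ((1 + α 0) - 1) * (α j * pp m v α (t - v j))) := by
    funext t
    rw [Finset.sum_apply]
    unfold gg
    rw [Finset.mul_sum]
  rw [hsum]
  apply IntervalIntegrable.sum
  intro j hj
  have hvj' := hvj j hj
  have h1 : IntervalIntegrable (fun t : ℝ => pp m v α (t - v j)) volume (v 1) b := by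
    have h2 := (hpp (v 1 - v j) (b - v j) (by linarith) (by linarith)).comp_sub_right (v j)
    have e1 : v 1 - v j + v j = v 1 := by ring
    have e2 : b - v j + v j = b := by ring
    rwa [e1, e2] at h2
  apply (h1.const_mul (α j)).continuousOn_mul
  intro t ht
  rw [Set.uIcc_of_le hb] at ht
  exact (Complex.continuousAt_ofReal_cpow_const t _
    (Or.inr (by have := ht.1; intro h; rw [h] at this; linarith))).continuousWithinAt

lemma step_integrable (hv1 : 0 < v 1) (hvj : ∀ j ∈ Finset.Icc 1 m, v 1 ≤ v j) {b : ℝ}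
    (hb : v 1 ≤ b) (hgg : IntervalIntegrable (gg m v α) volume (v 1) b) :
    IntervalIntegrable (pp m v α) volume (v 1) b := by
  have hI : ContinuousOn (fun x => ∫ t in (v 1)..x, gg m v α t) (Set.uIcc (v 1) b) :=
    intervalIntegral.continuousOn_primitive_interval' hgg Set.left_mem_uIcc
  have hfn : ContinuousOn
      (fun x : ℝ => (x : ℂ) ^ (-(1 + α 0)) * (cc m v α - ∫ t in (v 1)..x, gg m v α t))
      (Set.uIcc (v 1) b) := by
    apply ContinuousOn.mul ?_ (continuousOn_const.sub hI)
    intro t ht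
    rw [Set.uIcc_of_le hb] at ht
    exact (Complex.continuousAt_ofReal_cpow_const t _
      (Or.inr (by have := ht.1; intro h; rw [h] at this; linarith))).continuousWithinAt
  have h2 := hfn.intervalIntegrable (μ := volume)
  rw [intervalIntegrable_iff] at h2 ⊢
  apply h2.congr_fun ?_ measurableSet_uIoc
  intro t ht
  rw [Set.uIoc_of_le hb] at ht
  exact (pp_gt hv1 hvj ht.1).symm

lemma pp_int_nat (hv1 : 0 < v 1) (hvj : ∀ j ∈ Finset.Icc 1 m, v 1 ≤ v j)
    (ha : (1 + α 0).re < 1) (n : ℕ) :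
    IntervalIntegrable (pp m v α) volume 0 ((n : ℝ) * v 1) := by
  induction n with
  | zero => simp [intervalIntegrable_iff]
  | succ n ih =>
    have hall := pp_int_of hv1 hvj ih (by positivity)
    have hb : v 1 ≤ ((n : ℝ) + 1) * v 1 := by nlinarith [Nat.cast_nonneg (α := ℝ) n]
    have hbv : ((n : ℝ) + 1) * v 1 - v 1 = (n : ℝ) * v 1 := by ring
    have hgg : IntervalIntegrable (gg m v α) volume (v 1) (((n : ℝ) + 1) * v 1) := by
      apply gg_int hv1 hvj hb
      rw [hbv]
      exact hall
    have h2 := (pp_int_base hv1 hvj ha).trans (step_integrable hv1 hvj hb hgg)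
    have : ((n + 1 : ℕ) : ℝ) * v 1 = ((n : ℝ) + 1) * v 1 := by push_cast; ring
    rwa [this]

lemma pp_int_all (hv1 : 0 < v 1) (hvj : ∀ j ∈ Finset.Icc 1 m, v 1 ≤ v j)
    (ha : (1 + α 0).re < 1) (x y : ℝ) :
    IntervalIntegrable (pp m v α) volume x y := by
  have key : ∀ x : ℝ, IntervalIntegrable (pp m v α) volume 0 x := by
    intro x
    have hx : x ≤ ((⌈x / v 1⌉₊ + 1 : ℕ) : ℝ) * v 1 := le_ceil_mul hv1 x
    exact pp_int_of hv1 hvj (pp_int_nat hv1 hvj ha _) (by positivity) 0 x (by positivity) hx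
  exact (key x).symm.trans (key y)

lemma gg_int_all (hv1 : 0 < v 1) (hvj : ∀ j ∈ Finset.Icc 1 m, v 1 ≤ v j)
    (ha : (1 + α 0).re < 1) (x y : ℝ) :
    IntervalIntegrable (gg m v α) volume x y := by
  have key : ∀ b : ℝ, IntervalIntegrable (gg m v α) volume (v 1) b := by
    intro b
    rcases le_or_gt (v 1) b with h | h
    · exact gg_int hv1 hvj h (fun x y _ _ => pp_int_all hv1 hvj ha x y)
    · rw [intervalIntegrable_iff]
      have h0 : IntegrableOn (fun _ : ℝ => (0 : ℂ)) (Set.uIoc (v 1) b) volume :=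
        integrableOn_zero
      apply h0.congr_fun ?_ measurableSet_uIoc
      intro t ht
      rw [Set.uIoc_of_ge h.le] at ht
      exact (gg_nonpos hv1 hvj ht.2).symm
  exact (key x).symm.trans (key y)

lemma pp_contOn (hv1 : 0 < v 1) (hvj : ∀ j ∈ Finset.Icc 1 m, v 1 ≤ v j)
    (ha : (1 + α 0).re < 1) :
    ContinuousOn (pp m v α) (Set.Ioi 0) := by
  have hIcont : Continuous (fun x => ∫ t in (v 1)..x, gg m v α t) :=
    intervalIntegral.continuous_primitive (gg_int_all hv1 hvj ha) (v 1)
  intro u hu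
  simp only [Set.mem_Ioi] at hu
  rcases lt_or_ge u (v 1) with h | h
  · have hev : (fun x : ℝ => cc m v α * (x : ℂ) ^ (-(1 + α 0))) =ᶠ[𝓝 u] pp m v α := by
      filter_upwards [Ioo_mem_nhds hu h] with x hx
      exact (pp_base hv1 hvj hx.1 hx.2.le).symm
    exact ((continuousAt_const.mul
      (Complex.continuousAt_ofReal_cpow_const u _ (Or.inr (ne_of_gt hu)))).congr
      hev).continuousWithinAt
  · have h2 : ContinuousWithinAt (pp m v α) (Set.Ici (v 1)) u := by
      have hfn : ContinuousAt
          (fun x : ℝ => (x : ℂ) ^ (-(1 + α 0)) * (cc m v α - ∫ t in (v 1)..x, gg m v α t)) u :=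
        (Complex.continuousAt_ofReal_cpow_const u _
          (Or.inr (by intro h'; rw [h'] at h; linarith))).mul
          (continuousAt_const.sub hIcont.continuousAt)
      have heq : Set.EqOn (pp m v α)
          (fun x : ℝ => (x : ℂ) ^ (-(1 + α 0)) * (cc m v α - ∫ t in (v 1)..x, gg m v α t))
          (Set.Ici (v 1)) := by
        intro x hx
        rcases eq_or_lt_of_le (Set.mem_Ici.mp hx) with hx1 | hx1
        · subst hx1
          dsimp only
          rw [intervalIntegral.integral_same, sub_zero, pp_base hv1 hvj hv1 le_rfl, mul_comm]
        · exact pp_gt hv1 hvj hx1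
      exact hfn.continuousWithinAt.congr heq (heq (Set.mem_Ici.mpr h))
    have h1 : ContinuousWithinAt (pp m v α) (Set.Ioc 0 (v 1)) u := by
      rcases eq_or_lt_of_le h with h' | h'
      · subst h'
        have hca : ContinuousAt (fun x : ℝ => cc m v α * (x : ℂ) ^ (-(1 + α 0))) (v 1) :=
          continuousAt_const.mul
            (Complex.continuousAt_ofReal_cpow_const (v 1) _ (Or.inr (ne_of_gt hv1)))
        apply hca.continuousWithinAt.congr
        · intro x hx
          exact pp_base hv1 hvj hx.1 hx.2
        · exact pp_base hv1 hvj hv1 le_rfl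
      · apply continuousWithinAt_of_notMem_closure
        rw [closure_Ioc (ne_of_lt hv1)]
        intro hc
        exact absurd hc.2 (not_le.mpr h')
    apply (h1.union h2).mono
    intro x hx
    simp only [Set.mem_Ioi] at hx
    rcases le_or_gt x (v 1) with h3 | h3
    · exact Or.inl ⟨hx, h3⟩
    · exact Or.inr h3.le

lemma fix_of_isAdjoint (hv1 : 0 < v 1) (hvj : ∀ j ∈ Finset.Icc 1 m, v 1 ≤ v j)
    {q : ℝ → ℂ} (hq : IsAdjointP m v α q) : ∀ u : ℝ, q u = F m v α q u := by
  intro u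
  unfold F
  split_ifs with h1 h2
  · exact hq.1 u h1
  · have := hq.2.1 u (not_le.mp h1) h2
    rw [this]; rfl
  · push_neg at h1 h2
    have h4 := hq.2.2.2 u h2.le
    have hqv1 : q (v 1) = cc m v α * ((v 1 : ℝ) : ℂ) ^ (-(1 + α 0)) := by
      have := hq.2.1 (v 1) hv1 le_rfl
      rw [this]; rfl
    have hK : ((v 1 : ℝ) : ℂ) ^ (1 + α 0) * q (v 1) = cc m v α := by
      rw [hqv1, mul_comm (cc m v α), ← mul_assoc, cpow_mul_cpow_neg (ne_of_gt hv1), one_mul]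
    rw [hK] at h4
    rw [← h4, ← mul_assoc, cpow_neg_mul_cpow (ne_of_gt h1), one_mul]

lemma uniq (hv1 : 0 < v 1) (hvj : ∀ j ∈ Finset.Icc 1 m, v 1 ≤ v j)
    {q : ℝ → ℂ} (hfix : ∀ u : ℝ, q u = F m v α q u) : q = pp m v α := by
  have key : ∀ k : ℕ, Set.EqOn q (pp m v α) (Set.Iic ((k : ℝ) * v 1)) := by
    intro k
    induction k with
    | zero =>
      intro u hu
      simp only [Set.mem_Iic, Nat.cast_zero, zero_mul] at hu
      rw [hfix u, F_nonpos _ hu, pp_nonpos hv1 hvj hu]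
    | succ k ih =>
      intro u hu
      simp only [Set.mem_Iic] at hu
      push_cast at hu
      rw [hfix u, pp_fixed hv1 hvj u]
      apply F_locality hv1 hvj ih
      simp only [Set.mem_Iic]
      linarith
  funext u
  exact key (⌈u / v 1⌉₊ + 1) (le_ceil_mul hv1 u)

end

end Stmt11Aux

theorem stmt11 (m : ℕ) (hm : 1 ≤ m) (v : ℕ → ℝ) (α : ℕ → ℂ)
    (hv0 : v 0 = 0) (hv : ∀ i, i < m → v i < v (i + 1))
    (hα : ∀ j, 1 ≤ j → j ≤ m → α j ≠ 0)
    (ha : (1 + α 0).re < 1) :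
    ∃! p : ℝ → ℂ, IsAdjointP m v α p := by
  have hv1 : 0 < v 1 := by
    have := hv 0 (by omega)
    rwa [hv0] at this
  have hvj : ∀ j ∈ Finset.Icc 1 m, v 1 ≤ v j := by
    intro j hj
    rw [Finset.mem_Icc] at hj
    obtain ⟨h1j, hjm⟩ := hj
    clear hα
    induction j, h1j using Nat.le_induction with
    | base => exact le_rfl
    | succ j h1j ih =>
      have h5 := hv j (by omega)
      have h6 := ih (by omega)
      linarith
  have ha' : (1 + α 0).re < 1 := ha
  refine ⟨Stmt11Aux.pp m v α, ⟨?_, ?_, ?_, ?_⟩, ?_⟩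
  · exact fun u hu => Stmt11Aux.pp_nonpos hv1 hvj hu
  · intro u h0 h1
    have := Stmt11Aux.pp_base (α := α) hv1 hvj h0 h1
    rw [this]; rfl
  · exact Stmt11Aux.pp_contOn hv1 hvj ha
  · intro u hu
    have h4 := Stmt11Aux.pp_eq4 (α := α) hv1 hvj hu
    have h5 := Stmt11Aux.v1a_pp (α := α) hv1 hvj
    rw [h4, h5]
    rfl
  · intro q hq
    exact Stmt11Aux.uniq hv1 hvj (Stmt11Aux.fix_of_isAdjoint hv1 hvj hq)
end

section
/- Suppose q : ℝ → ℂ solves (E+), and suppose there exist a real number λ > 0 and constants B, u_0 > 0 such that |q(u)| ≤ B·e^{λu} for all u ≥ u_0. Then there exists a complex number A such that q(u)·u^{−β} → A as the real variable u → ∞ (u^{−β} the complex power of the positive real u). -/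
open MeasureTheory Filter Set Topology intervalIntegral

set_option maxHeartbeats 1000000

lemma hasDerivAt_real_cpow' {x : ℝ} (hx : 0 < x) (c : ℂ) :
    HasDerivAt (fun t : ℝ => (t : ℂ) ^ c) (c * (x:ℂ) ^ (c - 1)) x := by
  have h := ((Complex.hasStrictDerivAt_cpow_const
      (x := (x:ℂ)) (c := c) (Or.inl (by simpa using hx))).hasDerivAt).comp_ofReal
  simpa using h

lemma contAt_real_cpow {x : ℝ} (hx : 0 < x) (c : ℂ) :
    ContinuousAt (fun t : ℝ => (t : ℂ) ^ c) x :=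
  (hasDerivAt_real_cpow' hx c).continuousAt

lemma window_hasDerivAt (φ : ℝ → ℂ) (w : ℝ)
    (hφ : ∀ x, w < x → ContinuousAt φ x)
    (vv : ℝ) (hvv : 0 ≤ vv) {u : ℝ} (hu : w < u) :
    HasDerivAt (fun x => ∫ t in x..(x + vv), φ t) (φ (u + vv) - φ u) u := by
  set w' : ℝ := (w + u) / 2 with hw'
  have hw'w : w < w' := by simp [hw']; linarith
  have hw'u : w' < u := by simp [hw']; linarith
  have hcont : ContinuousOn φ (Ioi w) := by
    intro x hx; exact (hφ x hx).continuousWithinAt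
  have hii : ∀ a b : ℝ, w < a → w < b → IntervalIntegrable φ volume a b := by
    intro a b ha hb
    apply ContinuousOn.intervalIntegrable
    apply hcont.mono
    intro x hx
    rcases le_total a b with h | h
    · rw [uIcc_of_le h] at hx; exact lt_of_lt_of_le ha hx.1
    · rw [uIcc_of_ge h] at hx; exact lt_of_lt_of_le hb hx.1
  have hmeas : ∀ x, w < x → StronglyMeasurableAtFilter φ (𝓝 x) volume :=
    ContinuousAt.stronglyMeasurableAtFilter isOpen_Ioi (fun x hx => hφ x hx)
  have h1 : HasDerivAt (fun x => ∫ t in w'..x, φ t) (φ u) u :=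
    integral_hasDerivAt_right (hii w' u hw'w (lt_trans hw'w hw'u))
      (hmeas u (lt_trans hw'w hw'u)) (hφ u (lt_trans hw'w hw'u))
  have h2' : HasDerivAt (fun y => ∫ t in w'..y, φ t) (φ (u + vv)) (u + vv) :=
    integral_hasDerivAt_right (hii w' (u + vv) hw'w (by linarith))
      (hmeas (u + vv) (by linarith)) (hφ (u + vv) (by linarith))
  have hadd : HasDerivAt (fun x : ℝ => x + vv) 1 u := (hasDerivAt_id u).add_const vv
  have h2 : HasDerivAt (fun x => ∫ t in w'..(x + vv), φ t) (φ (u + vv)) u := by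
    have := HasDerivAt.scomp u h2' hadd
    exact (by simpa using this : HasDerivAt ((fun y => ∫ t in w'..y, φ t) ∘ fun x => x + vv) (φ (u + vv)) u)
  have h3 := h2.sub h1
  apply h3.congr_of_eventuallyEq
  have hmem : Ioi w' ∈ 𝓝 u := Ioi_mem_nhds hw'u
  filter_upwards [hmem] with x hx
  have := integral_interval_sub_left (hii w' (x + vv) hw'w (by simp at hx; linarith))
    (hii w' x hw'w (lt_trans hw'w hx))
  exact this.symm

lemma sum_alg (s : Finset ℕ) (a Q c : ℕ → ℂ) (X Qu : ℂ) :
    ∑ j ∈ s, a j * Q j * (X - c j)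
      = (∑ j ∈ s, a j * Q j) * X + Qu * (-(∑ j ∈ s, a j) * X)
        - ∑ j ∈ s, a j * (c j * Q j - X * Qu) := by
  simp only [Finset.sum_mul, Finset.mul_sum, mul_neg, neg_mul, ← Finset.sum_neg_distrib,
    ← Finset.sum_sub_distrib, ← Finset.sum_add_distrib]
  exact Finset.sum_congr rfl fun j _ => by ring

lemma cpow_sub_cpow_bound {t vv : ℝ} (ht : 0 < t) (hvv : 0 ≤ vv) (c : ℂ) (D : ℝ)
    (hD : ∀ s : ℝ, t ≤ s → s ≤ t + vv → s ^ (c.re - 1) ≤ D) :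
    ‖(t:ℂ) ^ c - ((t + vv : ℝ) : ℂ) ^ c‖ ≤ ‖c‖ * D * vv := by
  have key : (((t + vv : ℝ)) : ℂ) ^ c - (t:ℂ) ^ c
      = ∫ s in t..(t + vv), c * (s:ℂ) ^ (c - 1) := by
    refine (intervalIntegral.integral_eq_sub_of_hasDerivAt (f := fun s : ℝ => (s:ℂ)^c)
      (f' := fun s : ℝ => c * (s:ℂ)^(c-1)) (fun s hs => ?_) ?_).symm
    · refine hasDerivAt_real_cpow' ?_ c
      rw [uIcc_of_le (by linarith)] at hs
      linarith [hs.1]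
    · refine (ContinuousOn.intervalIntegrable ?_)
      intro s hs
      rw [uIcc_of_le (by linarith)] at hs
      exact (continuousAt_const.mul (contAt_real_cpow (by linarith [hs.1]) (c-1))).continuousWithinAt
  have hb : ∀ s ∈ Set.uIoc t (t + vv), ‖c * (s:ℂ) ^ (c - 1)‖ ≤ ‖c‖ * D := by
    intro s hs
    rw [Set.uIoc_of_le (by linarith)] at hs
    have hs0 : 0 < s := lt_of_lt_of_le ht (le_of_lt hs.1)
    rw [norm_mul,
      Complex.norm_cpow_eq_rpow_re_of_pos hs0]
    have : (c - 1).re = c.re - 1 := by simp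
    rw [this]
    exact mul_le_mul_of_nonneg_left (hD s hs.1.le hs.2) (norm_nonneg c)
  have := intervalIntegral.norm_integral_le_of_norm_le_const hb
  rw [← key] at this
  have h2 : ‖(t:ℂ) ^ c - ((t + vv : ℝ) : ℂ) ^ c‖
      = ‖(((t + vv : ℝ)) : ℂ) ^ c - (t:ℂ) ^ c‖ := by
    exact norm_sub_rev _ _
  rw [h2]
  calc ‖(((t + vv : ℝ)) : ℂ) ^ c - (t:ℂ) ^ c‖ ≤ ‖c‖ * D * |t + vv - t| := this
    _ = ‖c‖ * D * vv := by rw [abs_of_nonneg (by linarith)]; ring_nf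

section Aux

variable (m : ℕ) (v : ℕ → ℝ) (α : ℕ → ℂ) (q : ℝ → ℂ)

lemma I_deriv (hq : SolvesEplus m v α q) (hvnn : ∀ j, j ≤ m → 0 ≤ v j)
    {u : ℝ} (hu : 0 < u) :
    HasDerivAt (fun x : ℝ => q x * (x:ℂ) ^ (-(∑ j ∈ Finset.range (m+1), α j))
        - ∑ j ∈ Finset.range (m+1), α j * ∫ t in x..(x + v j),
            (t:ℂ) ^ (-(∑ i ∈ Finset.range (m+1), α i) - 1) * q t)
      (∑ j ∈ Finset.range (m+1), α j * q (u + v j) *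
        ((u:ℂ) ^ (-(∑ i ∈ Finset.range (m+1), α i) - 1)
          - ((u + v j : ℝ) : ℂ) ^ (-(∑ i ∈ Finset.range (m+1), α i) - 1))) u := by
  set β : ℂ := ∑ j ∈ Finset.range (m+1), α j with hβ
  set φ : ℝ → ℂ := fun t => (t:ℂ) ^ (-β - 1) * q t with hφ
  have hqc : ∀ x : ℝ, 0 < x → ContinuousAt q x := fun x hx => (hq x hx).1.continuousAt
  have hφc : ∀ x : ℝ, 0 < x → ContinuousAt φ x := fun x hx =>
    (contAt_real_cpow hx (-β - 1)).mul (hqc x hx)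
  -- derivative of the windows
  have hW : ∀ j ∈ Finset.range (m+1), HasDerivAt
      (fun x : ℝ => α j * ∫ t in x..(x + v j), φ t) (α j * (φ (u + v j) - φ u)) u := by
    intro j hj
    exact HasDerivAt.const_mul (α j)
      (window_hasDerivAt φ 0 (fun x hx => hφc x hx) (v j)
        (hvnn j (Nat.lt_succ_iff.mp (Finset.mem_range.mp hj))) hu)
  have hWsum := HasDerivAt.sum hW
  -- derivative of f
  have hx0 : (u:ℂ) ≠ 0 := Complex.ofReal_ne_zero.mpr hu.ne'
  have hg : HasDerivAt (fun x : ℝ => (x:ℂ) ^ (-β)) (-β * (u:ℂ) ^ (-β - 1)) u := by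
    simpa using hasDerivAt_real_cpow' hu (-β)
  have hf : HasDerivAt (fun x : ℝ => q x * (x:ℂ) ^ (-β))
      (deriv q u * (u:ℂ) ^ (-β) + q u * (-β * (u:ℂ) ^ (-β - 1))) u :=
    ((hq u hu).1.hasDerivAt).mul hg
  have h := hf.sub hWsum
  convert h using 1
  · rfl
  · funext x; simp only [Pi.sub_apply, Finset.sum_apply]
  -- now algebra
  have hsplit : (u:ℂ) ^ (-β) = (u:ℂ) ^ (-β - 1) * u := by
    have h1 : -β = (-β - 1) + 1 := by ring
    conv_lhs => rw [h1]
    rw [Complex.cpow_add _ _ hx0, Complex.cpow_one]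
  have heq : (u : ℂ) * deriv q u = ∑ j ∈ Finset.range (m+1), α j * q (u + v j) :=
    (hq u hu).2
  have hstep : deriv q u * (u:ℂ) ^ (-β)
      = (∑ j ∈ Finset.range (m+1), α j * q (u + v j)) * (u:ℂ) ^ (-β - 1) := by
    rw [hsplit, ← heq]; ring
  rw [hstep]
  exact sum_alg (Finset.range (m+1)) α (fun j => q (u + v j))
    (fun j => ((u + v j : ℝ):ℂ) ^ (-β - 1)) ((u:ℂ) ^ (-β - 1)) (q u)

end Aux
theorem stmt18 (m : ℕ) (v : ℕ → ℝ) (α : ℕ → ℂ)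
    (hv0 : v 0 = 0) (hv : ∀ i, i < m → v i < v (i + 1))
    (hα : ∀ j, 1 ≤ j → j ≤ m → α j ≠ 0)
    (q : ℝ → ℂ) (hq : SolvesEplus m v α q)
    (lam B u₀ : ℝ) (hlam : 0 < lam) (hB : 0 < B) (hu₀ : 0 < u₀)
    (hbound : ∀ u : ℝ, u₀ ≤ u → ‖q u‖ ≤ B * Real.exp (lam * u)) :
    ∃ A : ℂ, Tendsto (fun u : ℝ => q u * (u : ℂ) ^ (-(∑ j ∈ Finset.range (m + 1), α j)))
      atTop (nhds A) := by
  set β : ℂ := ∑ j ∈ Finset.range (m + 1), α j with hβ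
  set r : ℝ := β.re with hrdef
  set V : ℝ := v m with hVdef
  -- monotonicity facts
  have vmono : ∀ k, k ≤ m → ∀ j, j ≤ k → v j ≤ v k := by
    intro k
    induction k with
    | zero => intro _ j hj; rw [Nat.le_zero.mp hj]
    | succ n ih =>
      intro hk j hj
      by_cases hj' : j = n + 1
      · rw [hj']
      · have hjn : j ≤ n := Nat.lt_succ_iff.mp (lt_of_le_of_ne hj hj')
        exact (ih (le_trans (Nat.le_succ n) hk) j hjn).trans (hv n (Nat.lt_of_succ_le hk)).le
  have hv_nonneg : ∀ j, j ≤ m → 0 ≤ v j := fun j hj => hv0 ▸ vmono j hj 0 (Nat.zero_le j)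
  have hv_le : ∀ j, j ≤ m → v j ≤ V := fun j hj => vmono m le_rfl j hj
  have hV0 : 0 ≤ V := hv_nonneg m le_rfl
  -- constants
  set S : ℝ := ∑ j ∈ Finset.range (m + 1), ‖α j‖ with hSdef
  have hS0 : 0 ≤ S := Finset.sum_nonneg fun j _ => norm_nonneg _
  set Cr : ℝ := (2:ℝ) ^ |r| with hCrdef
  set C₂ : ℝ := (2:ℝ) ^ |r + 2| with hC2def
  set CB : ℝ := ‖-β - 1‖ with hCBdef
  have hCr1 : 1 ≤ Cr := Real.one_le_rpow one_le_two (abs_nonneg r)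
  have hC21 : 1 ≤ C₂ := Real.one_le_rpow one_le_two (abs_nonneg (r + 2))
  have hCB0 : 0 ≤ CB := norm_nonneg _
  set C₄ : ℝ := S * (Cr * (CB * (C₂ * V))) with hC4def
  have hC40 : 0 ≤ C₄ := mul_nonneg hS0 (mul_nonneg (le_trans zero_le_one hCr1)
    (mul_nonneg hCB0 (mul_nonneg (le_trans zero_le_one hC21) hV0)))
  set C₅ : ℝ := S * V + C₄ with hC5def
  have hC50 : 0 ≤ C₅ := add_nonneg (mul_nonneg hS0 hV0) hC40
  set μ : ℝ := lam + |r| with hμdef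
  have hμ0 : 0 ≤ μ := add_nonneg hlam.le (abs_nonneg r)
  set u₁ : ℝ := max (max u₀ (V + 1)) (2 * C₅ * Real.exp (μ * V) + 1) with hu₁def
  have hu₁V : V + 1 ≤ u₁ := le_trans (le_max_right _ _) (le_max_left _ _)
  have hu₁u₀ : u₀ ≤ u₁ := le_trans (le_max_left _ _) (le_max_left _ _)
  have hu₁1 : 1 ≤ u₁ := by linarith
  have hu₁0 : 0 < u₁ := by linarith
  have hu₁C : 2 * C₅ * Real.exp (μ * V) + 1 ≤ u₁ := le_max_right _ _
  set c : ℝ := C₅ / u₁ with hcdef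
  have hc0 : 0 ≤ c := div_nonneg hC50 hu₁0.le
  have hexpV1 : 1 ≤ Real.exp (μ * V) := Real.one_le_exp (mul_nonneg hμ0 hV0)
  have hc1 : c * Real.exp (μ * V) ≤ 1 / 2 := by
    rw [hcdef, div_mul_eq_mul_div, div_le_iff₀ hu₁0]
    nlinarith [Real.exp_pos (μ * V), mul_nonneg hC50 (zero_le_one.trans hexpV1)]
  have hc2 : c ≤ 1 / 2 := by
    calc c = c * 1 := (mul_one c).symm
    _ ≤ c * Real.exp (μ * V) := by nlinarith
    _ ≤ 1 / 2 := hc1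
  -- functions
  set φ : ℝ → ℂ := fun t => (t:ℂ) ^ (-β - 1) * q t with hφdef
  set f : ℝ → ℂ := fun t => q t * (t:ℂ) ^ (-β) with hfdef
  set ψ : ℝ → ℂ := fun t => ∑ j ∈ Finset.range (m + 1), α j * q (t + v j) *
      ((t:ℂ) ^ (-β - 1) - ((t + v j : ℝ) : ℂ) ^ (-β - 1)) with hψdef
  set W : ℝ → ℂ := fun x => ∑ j ∈ Finset.range (m + 1),
      α j * ∫ t in x..(x + v j), φ t with hWdef
  -- continuity
  have hqc : ∀ x : ℝ, 0 < x → ContinuousAt q x := fun x hx => (hq x hx).1.continuousAt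
  have hφc : ∀ x : ℝ, 0 < x → ContinuousAt φ x := fun x hx =>
    (contAt_real_cpow hx (-β - 1)).mul (hqc x hx)
  have hfc : ∀ x : ℝ, 0 < x → ContinuousAt f x := fun x hx =>
    (hqc x hx).mul (contAt_real_cpow hx (-β))
  have hψc : ∀ x : ℝ, 0 < x → ContinuousAt ψ x := by
    intro x hx
    apply tendsto_finset_sum
    intro j hj
    have hj' : j ≤ m := Nat.lt_succ_iff.mp (Finset.mem_range.mp hj)
    have hxv : 0 < x + v j := by have := hv_nonneg j hj'; linarith
    have hshift : Tendsto (fun t : ℝ => t + v j) (𝓝 x) (𝓝 (x + v j)) :=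
      (continuous_id.add continuous_const).continuousAt
    have h1 : ContinuousAt (fun t : ℝ => q (t + v j)) x :=
      Filter.Tendsto.comp (hqc _ hxv) hshift
    have h2 : ContinuousAt (fun t : ℝ => ((t + v j : ℝ) : ℂ) ^ (-β - 1)) x :=
      Filter.Tendsto.comp (contAt_real_cpow hxv (-β - 1)) hshift
    exact (continuousAt_const.mul h1).mul ((contAt_real_cpow hx (-β - 1)).sub h2)
  -- abs identities
  have habsf : ∀ t : ℝ, 0 < t → ‖f t‖ = t ^ (-r) * ‖q t‖ := by
    intro t ht
    rw [hfdef]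
    simp only [norm_mul]
    rw [Complex.norm_cpow_eq_rpow_re_of_pos ht]
    simp [mul_comm, hrdef]
  have habsq : ∀ t : ℝ, 0 < t → ‖q t‖ = t ^ r * ‖f t‖ := by
    intro t ht
    rw [habsf t ht, ← mul_assoc, ← Real.rpow_add ht]
    simp
  have habsφ : ∀ t : ℝ, 0 < t → ‖φ t‖ = t⁻¹ * ‖f t‖ := by
    intro t ht
    rw [hφdef]
    simp only [norm_mul]
    rw [Complex.norm_cpow_eq_rpow_re_of_pos ht, habsf t ht, ← mul_assoc]
    congr 1
    have : (-β - 1).re = (-r) + (-1) := by simp [hrdef]; ring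
    rw [this, Real.rpow_add ht, Real.rpow_neg_one, mul_comm]
  -- derivative of the conserved-type quantity
  have hIderiv : ∀ u : ℝ, 0 < u → HasDerivAt (fun x => f x - W x) (ψ u) u := by
    intro u hu
    exact I_deriv m v α q hq hv_nonneg hu
  -- FTC identity
  have hIdent : ∀ u : ℝ, u₁ ≤ u → f u = (f u₁ - W u₁) + W u + ∫ t in u₁..u, ψ t := by
    intro u hu
    have hint : (∫ t in u₁..u, ψ t) = (f u - W u) - (f u₁ - W u₁) := by
      apply intervalIntegral.integral_eq_sub_of_hasDerivAt
      · intro x hx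
        rw [uIcc_of_le hu] at hx
        exact hIderiv x (lt_of_lt_of_le hu₁0 hx.1)
      · apply ContinuousOn.intervalIntegrable
        intro x hx
        rw [uIcc_of_le hu] at hx
        exact (hψc x (lt_of_lt_of_le hu₁0 hx.1)).continuousWithinAt
    linear_combination -hint
  -- window bound
  have hwin : ∀ u : ℝ, u₁ ≤ u → ∀ F : ℝ, 0 ≤ F →
      (∀ s : ℝ, u₁ ≤ s → s ≤ u + V → ‖f s‖ ≤ F) →
      ‖W u‖ ≤ S * V * F / u := by
    intro u hu F hF hFs
    have hu0 : 0 < u := lt_of_lt_of_le hu₁0 hu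
    have hterm : ∀ j ∈ Finset.range (m + 1),
        ‖α j * ∫ t in u..(u + v j), φ t‖
          ≤ ‖α j‖ * (V * F / u) := by
      intro j hj
      have hj' : j ≤ m := Nat.lt_succ_iff.mp (Finset.mem_range.mp hj)
      have hvj0 : 0 ≤ v j := hv_nonneg j hj'
      have hvjV : v j ≤ V := hv_le j hj'
      rw [norm_mul]
      have hIb : ‖∫ t in u..(u + v j), φ t‖ ≤ (F / u) * |u + v j - u| := by
        apply intervalIntegral.norm_integral_le_of_norm_le_const
        intro t ht
        rw [uIoc_of_le (by linarith)] at ht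
        have habs : ‖φ t‖ = t⁻¹ * ‖f t‖ := habsφ t (hu0.trans ht.1)
        rw [habs]
        have h1 : t⁻¹ ≤ u⁻¹ := inv_anti₀ hu0 ht.1.le
        have h2 : ‖f t‖ ≤ F := hFs t (hu.trans ht.1.le)
          (ht.2.trans (by linarith))
        calc t⁻¹ * ‖f t‖ ≤ u⁻¹ * F :=
              mul_le_mul h1 h2 (norm_nonneg _) (by positivity)
          _ = F / u := by rw [inv_mul_eq_div]
      have hIb' : ‖∫ t in u..(u + v j), φ t‖ ≤ V * F / u := by
        refine hIb.trans ?_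
        calc (F / u) * |u + v j - u| = v j * F / u := by
              rw [show u + v j - u = v j by ring, abs_of_nonneg hvj0]; ring
          _ ≤ V * F / u := (div_le_div_iff_of_pos_right hu0).mpr (mul_le_mul_of_nonneg_right hvjV hF)
      exact mul_le_mul_of_nonneg_left hIb' (norm_nonneg _)
    rw [hWdef]
    refine le_trans (norm_sum_le _ _) (le_trans (Finset.sum_le_sum hterm) ?_)
    rw [← Finset.sum_mul, ← hSdef]
    apply le_of_eq; ring
  -- pointwise bound on ψ
  have hψb : ∀ t : ℝ, u₁ ≤ t → ∀ F : ℝ, 0 ≤ F →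
      (∀ s : ℝ, u₁ ≤ s → s ≤ t + V → ‖f s‖ ≤ F) →
      ‖ψ t‖ ≤ C₄ * F * t ^ (-2 : ℝ) := by
    intro t ht F hF hFs
    have ht0 : 0 < t := lt_of_lt_of_le hu₁0 ht
    have htV : V ≤ t := by linarith [hu₁V]
    have htr0 : (0:ℝ) ≤ t ^ r := Real.rpow_nonneg ht0.le r
    have htr2 : (0:ℝ) ≤ t ^ (-r - 2) := Real.rpow_nonneg ht0.le _
    have hCr0 : (0:ℝ) ≤ Cr := zero_le_one.trans hCr1
    have hC20 : (0:ℝ) ≤ C₂ := zero_le_one.trans hC21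
    have hterm : ∀ j ∈ Finset.range (m + 1),
        ‖α j * q (t + v j) * ((t:ℂ) ^ (-β - 1) - ((t + v j : ℝ) : ℂ) ^ (-β - 1))‖
          ≤ ‖α j‖ * (Cr * (CB * (C₂ * V)) * F * t ^ (-2 : ℝ)) := by
      intro j hj
      have hj' : j ≤ m := Nat.lt_succ_iff.mp (Finset.mem_range.mp hj)
      have hvj0 : 0 ≤ v j := hv_nonneg j hj'
      have hvjV : v j ≤ V := hv_le j hj'
      have htv0 : 0 < t + v j := by linarith
      have hqb : ‖q (t + v j)‖ ≤ Cr * t ^ r * F := by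
        rw [habsq _ htv0]
        have h1 : (t + v j) ^ r ≤ Cr * t ^ r := by
          rcases le_or_gt 0 r with hr0 | hr0
          · calc (t + v j) ^ r ≤ (2 * t) ^ r :=
                  Real.rpow_le_rpow (by linarith) (by linarith) hr0
              _ = 2 ^ r * t ^ r := Real.mul_rpow (by norm_num) ht0.le
              _ ≤ Cr * t ^ r := mul_le_mul_of_nonneg_right
                  (Real.rpow_le_rpow_of_exponent_le one_le_two (le_abs_self r)) htr0
          · calc (t + v j) ^ r ≤ t ^ r :=
                  Real.rpow_le_rpow_of_nonpos ht0 (by linarith) hr0.le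
              _ ≤ Cr * t ^ r := le_mul_of_one_le_left htr0 hCr1
        have h2 : ‖f (t + v j)‖ ≤ F := hFs _ (by linarith) (by linarith)
        calc (t + v j) ^ r * ‖f (t + v j)‖ ≤ (Cr * t ^ r) * F :=
              mul_le_mul h1 h2 (norm_nonneg _) (by positivity)
          _ = Cr * t ^ r * F := by ring
      have hdiff : ‖(t:ℂ) ^ (-β - 1) - ((t + v j : ℝ) : ℂ) ^ (-β - 1)‖
          ≤ CB * (C₂ * t ^ (-r - 2)) * V := by
        have hD : ∀ s : ℝ, t ≤ s → s ≤ t + v j →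
            s ^ ((-β - 1).re - 1) ≤ C₂ * t ^ (-r - 2) := by
          intro s hs1 hs2
          have hre : (-β - 1).re - 1 = -r - 2 := by simp [hrdef]; ring
          rw [hre]
          rcases le_or_gt (-r - 2) 0 with hp | hp
          · calc s ^ (-r - 2) ≤ t ^ (-r - 2) :=
                  Real.rpow_le_rpow_of_nonpos ht0 hs1 hp
              _ ≤ C₂ * t ^ (-r - 2) := le_mul_of_one_le_left htr2 hC21
          · have habs : -r - 2 ≤ |r + 2| := by
              have := neg_abs_le (r + 2); have := le_abs_self (r + 2)
              cases abs_cases (r + 2) <;> linarith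
            calc s ^ (-r - 2) ≤ (2 * t) ^ (-r - 2) :=
                  Real.rpow_le_rpow (by linarith) (by linarith) hp.le
              _ = 2 ^ (-r - 2) * t ^ (-r - 2) := Real.mul_rpow (by norm_num) ht0.le
              _ ≤ C₂ * t ^ (-r - 2) := mul_le_mul_of_nonneg_right
                  (Real.rpow_le_rpow_of_exponent_le one_le_two habs) htr2
        have hkey := cpow_sub_cpow_bound ht0 hvj0 (-β - 1) (C₂ * t ^ (-r - 2)) hD
        calc ‖(t:ℂ) ^ (-β - 1) - ((t + v j : ℝ) : ℂ) ^ (-β - 1)‖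
            ≤ ‖-β - 1‖ * (C₂ * t ^ (-r - 2)) * v j := hkey
          _ ≤ CB * (C₂ * t ^ (-r - 2)) * V := by
              rw [← hCBdef]
              exact mul_le_mul_of_nonneg_left hvjV (by positivity)
      calc ‖α j * q (t + v j) * ((t:ℂ) ^ (-β - 1) - ((t + v j : ℝ) : ℂ) ^ (-β - 1))‖
          = ‖α j‖ * ‖q (t + v j)‖ *
              ‖(t:ℂ) ^ (-β - 1) - ((t + v j : ℝ) : ℂ) ^ (-β - 1)‖ := by
            rw [norm_mul, norm_mul]
        _ ≤ ‖α j‖ * (Cr * t ^ r * F) * (CB * (C₂ * t ^ (-r - 2)) * V) := by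
            apply mul_le_mul _ hdiff (norm_nonneg _) (by positivity)
            exact mul_le_mul_of_nonneg_left hqb (norm_nonneg _)
        _ = ‖α j‖ * (Cr * (CB * (C₂ * V)) * F * (t ^ r * t ^ (-r - 2))) := by
            ring
        _ = ‖α j‖ * (Cr * (CB * (C₂ * V)) * F * t ^ (-2 : ℝ)) := by
            have hexp : t ^ r * t ^ (-r - 2) = t ^ (-2:ℝ) := by
              rw [← Real.rpow_add ht0, show r + (-r - 2) = (-2:ℝ) by ring]
            rw [hexp]
    rw [hψdef]
    refine le_trans (norm_sum_le _ _) (le_trans (Finset.sum_le_sum hterm) ?_)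
    rw [← Finset.sum_mul, ← hSdef, hC4def]
    apply le_of_eq; ring
  -- bound for the accumulated integral of ψ
  have hIntb : ∀ u : ℝ, u₁ ≤ u → ∀ F : ℝ, 0 ≤ F →
      (∀ s : ℝ, u₁ ≤ s → s ≤ u + V → ‖f s‖ ≤ F) →
      ‖∫ t in u₁..u, ψ t‖ ≤ C₄ * F / u₁ := by
    intro u hu F hF hFs
    have key : ‖∫ t in u₁..u, ψ t‖ ≤ |∫ t in u₁..u, C₄ * F * t ^ (-2:ℝ)| := by
      apply intervalIntegral.norm_integral_le_abs_of_norm_le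
      · rw [ae_restrict_iff' measurableSet_uIoc]
        apply ae_of_all
        intro t ht
        rw [uIoc_of_le hu] at ht
        exact hψb t ht.1.le F hF (fun s hs1 hs2 => hFs s hs1 (hs2.trans (by linarith [ht.2])))
      · apply ContinuousOn.intervalIntegrable
        intro x hx
        rw [uIcc_of_le hu] at hx
        exact (continuousAt_const.mul (Real.continuousAt_rpow_const x (-2:ℝ)
          (Or.inl (ne_of_gt (lt_of_lt_of_le hu₁0 hx.1))))).continuousWithinAt
    have hmem : (0:ℝ) ∉ uIcc u₁ u := by
      rw [uIcc_of_le hu]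
      intro h
      exact absurd h.1 (by linarith)
    have hval : (∫ t in u₁..u, C₄ * F * t ^ (-2:ℝ)) = C₄ * F * (u₁⁻¹ - u⁻¹) := by
      rw [intervalIntegral.integral_const_mul]
      have hint2 : (∫ t in u₁..u, t ^ (-2:ℝ)) = u₁⁻¹ - u⁻¹ := by
        rw [integral_rpow (Or.inr ⟨by norm_num, hmem⟩),
          show (-2:ℝ) + 1 = -1 by norm_num, Real.rpow_neg_one, Real.rpow_neg_one]
        ring
      rw [hint2]
    refine key.trans ?_
    rw [hval, abs_of_nonneg]
    · have hui : u⁻¹ ≤ u₁⁻¹ := inv_anti₀ hu₁0 hu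
      have h0u : (0:ℝ) < u := lt_of_lt_of_le hu₁0 hu
      calc C₄ * F * (u₁⁻¹ - u⁻¹) ≤ C₄ * F * u₁⁻¹ := by
            apply mul_le_mul_of_nonneg_left _ (mul_nonneg hC40 hF)
            have h2 : (0:ℝ) ≤ u⁻¹ := inv_nonneg.mpr h0u.le
            linarith
        _ = C₄ * F / u₁ := by rw [div_eq_mul_inv]
    · have hui : u⁻¹ ≤ u₁⁻¹ := inv_anti₀ hu₁0 hu
      exact mul_nonneg (mul_nonneg hC40 hF) (by linarith)
  -- running sup of |f| on [u₁, x]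
  set Mf : ℝ → ℝ := fun x => sSup ((fun t => ‖f t‖) '' Icc u₁ x) with hMdef
  have hfcont : ∀ x : ℝ, ContinuousOn (fun t => ‖f t‖) (Icc u₁ x) := by
    intro x t ht
    exact (continuous_norm.continuousAt.comp
      (hfc t (lt_of_lt_of_le hu₁0 ht.1))).continuousWithinAt
  have hMbdd : ∀ x : ℝ, BddAbove ((fun t => ‖f t‖) '' Icc u₁ x) := fun x =>
    (isCompact_Icc.image_of_continuousOn (hfcont x)).bddAbove
  have hMle : ∀ x t : ℝ, u₁ ≤ t → t ≤ x → ‖f t‖ ≤ Mf x := by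
    intro x t h1 h2
    exact le_csSup (hMbdd x) (mem_image_of_mem _ ⟨h1, h2⟩)
  have hMub : ∀ x F : ℝ, 0 ≤ F →
      (∀ t : ℝ, u₁ ≤ t → t ≤ x → ‖f t‖ ≤ F) → Mf x ≤ F := by
    intro x F hF h
    apply Real.sSup_le _ hF
    rintro y ⟨t, ht, rfl⟩
    exact h t ht.1 ht.2
  have hM0 : ∀ x : ℝ, 0 ≤ Mf x := fun x => Real.sSup_nonneg
    (by rintro y ⟨t, _, rfl⟩; exact norm_nonneg _)
  -- exponential bound
  set B₂ : ℝ := B * (u₁ ^ (-r) + 1) with hB₂def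
  have hu₁r : (0:ℝ) ≤ u₁ ^ (-r) := Real.rpow_nonneg hu₁0.le _
  have hB₂0 : 0 ≤ B₂ := mul_nonneg hB.le (by linarith)
  have hfexp : ∀ t : ℝ, u₁ ≤ t → ‖f t‖ ≤ B₂ * Real.exp (μ * t) := by
    intro t ht
    have ht0 : 0 < t := lt_of_lt_of_le hu₁0 ht
    have ht1 : 1 ≤ t := hu₁1.trans ht
    rw [habsf t ht0]
    have hqb : ‖q t‖ ≤ B * Real.exp (lam * t) := hbound t (hu₁u₀.trans ht)
    have hexppos : (0:ℝ) < Real.exp (|r| * t) := Real.exp_pos _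
    have htr : t ^ (-r) ≤ (u₁ ^ (-r) + 1) * Real.exp (|r| * t) := by
      rcases le_or_gt 0 r with hr0 | hr0
      · have h1 : t ^ (-r) ≤ u₁ ^ (-r) := Real.rpow_le_rpow_of_nonpos hu₁0 ht (by linarith)
        have h2 : 1 ≤ Real.exp (|r| * t) :=
          Real.one_le_exp (mul_nonneg (abs_nonneg r) ht0.le)
        nlinarith
      · have h3 : t ^ (-r) = Real.exp (Real.log t * (-r)) := Real.rpow_def_of_pos ht0 (-r)
        have h4 : Real.log t * (-r) ≤ |r| * t := by
          have hlog : Real.log t ≤ t := (Real.log_le_sub_one_of_pos ht0).trans (by linarith)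
          have hlog0 : 0 ≤ Real.log t := Real.log_nonneg ht1
          have h5 : -r ≤ |r| := neg_le_abs r
          have h6 : 0 < -r := by linarith
          nlinarith
        calc t ^ (-r) = Real.exp (Real.log t * (-r)) := h3
          _ ≤ Real.exp (|r| * t) := Real.exp_le_exp.mpr h4
          _ ≤ (u₁ ^ (-r) + 1) * Real.exp (|r| * t) := le_mul_of_one_le_left hexppos.le
              (by linarith)
    calc t ^ (-r) * ‖q t‖
        ≤ ((u₁ ^ (-r) + 1) * Real.exp (|r| * t)) * (B * Real.exp (lam * t)) :=
          mul_le_mul htr hqb (norm_nonneg _) (by nlinarith)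
      _ = B₂ * Real.exp (μ * t) := by
          rw [hB₂def, show μ * t = |r| * t + lam * t by rw [hμdef]; ring, Real.exp_add]
          ring
  have hMexp : ∀ x : ℝ, Mf x ≤ B₂ * Real.exp (μ * x) := by
    intro x
    apply hMub x _ (mul_nonneg hB₂0 (Real.exp_pos _).le)
    intro t h1 h2
    calc ‖f t‖ ≤ B₂ * Real.exp (μ * t) := hfexp t h1
      _ ≤ B₂ * Real.exp (μ * x) := mul_le_mul_of_nonneg_left
          (Real.exp_le_exp.mpr (mul_le_mul_of_nonneg_left h2 hμ0)) hB₂0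
  -- key recursion
  set K : ℝ := ‖f u₁ - W u₁‖ + 1 with hKdef
  have hK1 : 1 ≤ K := le_add_of_nonneg_left (norm_nonneg _)
  have hK0 : 0 ≤ K := zero_le_one.trans hK1
  have hKey : ∀ U : ℝ, u₁ ≤ U → Mf U ≤ K + c * Mf (U + V) := by
    intro U hU
    apply hMub _ _ (add_nonneg hK0 (mul_nonneg hc0 (hM0 _)))
    intro u h1 h2
    have hu0 : 0 < u := lt_of_lt_of_le hu₁0 h1
    have hFs : ∀ s : ℝ, u₁ ≤ s → s ≤ u + V → ‖f s‖ ≤ Mf (U + V) :=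
      fun s hs1 hs2 => hMle _ s hs1 (by linarith)
    have hW1 : ‖W u‖ ≤ S * V * Mf (U + V) / u := hwin u h1 _ (hM0 _) hFs
    have hW2 : ‖∫ t in u₁..u, ψ t‖ ≤ C₄ * Mf (U + V) / u₁ := hIntb u h1 _ (hM0 _) hFs
    have h3 : S * V * Mf (U + V) / u ≤ S * V * Mf (U + V) / u₁ :=
      div_le_div_of_nonneg_left (mul_nonneg (mul_nonneg hS0 hV0) (hM0 _)) hu₁0 h1
    have h5 : S * V * Mf (U + V) / u₁ + C₄ * Mf (U + V) / u₁ = c * Mf (U + V) := by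
      rw [hcdef, hC5def]
      field_simp
    calc ‖f u‖
        = ‖(f u₁ - W u₁) + W u + ∫ t in u₁..u, ψ t‖ := by rw [← hIdent u h1]
      _ ≤ ‖f u₁ - W u₁‖ + ‖W u‖ + ‖∫ t in u₁..u, ψ t‖ :=
          le_trans (norm_add_le _ _) (add_le_add_left (norm_add_le _ _) _)
      _ ≤ ‖f u₁ - W u₁‖ + S * V * Mf (U + V) / u + C₄ * Mf (U + V) / u₁ :=
          add_le_add (add_le_add_right hW1 _) hW2
      _ ≤ K + c * Mf (U + V) := by rw [hKdef]; linarith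
  -- iterate the recursion
  have hIter : ∀ k : ℕ, ∀ U : ℝ, u₁ ≤ U → Mf U ≤ 2 * K + c ^ k * Mf (U + (k:ℝ) * V) := by
    intro k
    induction k with
    | zero =>
      intro U hU
      have : U + ((0:ℕ):ℝ) * V = U := by push_cast; ring
      rw [this]
      simp only [pow_zero, one_mul]
      linarith [hM0 U]
    | succ n ih =>
      intro U hU
      have h1 := hKey U hU
      have h2 := ih (U + V) (by linarith)
      have h3 : U + V + (n:ℝ) * V = U + ((n+1 : ℕ):ℝ) * V := by push_cast; ring
      rw [h3] at h2
      have hM := hM0 (U + ((n+1:ℕ):ℝ) * V)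
      have hcn : (0:ℝ) ≤ c ^ n := pow_nonneg hc0 n
      calc Mf U ≤ K + c * Mf (U + V) := h1
        _ ≤ K + c * (2 * K + c ^ n * Mf (U + ((n+1:ℕ):ℝ) * V)) :=
            add_le_add_right (mul_le_mul_of_nonneg_left h2 hc0) _
        _ ≤ 2 * K + c ^ (n+1) * Mf (U + ((n+1:ℕ):ℝ) * V) := by
            have hpow : c ^ (n+1) = c * c ^ n := by ring
            nlinarith [mul_nonneg hcn hM]
  -- the global bound killing the exponential
  have hFbnd : ∀ t : ℝ, u₁ ≤ t → ‖f t‖ ≤ 2 * K := by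
    intro t ht
    have hlim : Tendsto (fun k : ℕ => 2 * K + B₂ * Real.exp (μ * t) * (1/2 : ℝ) ^ k)
        atTop (nhds (2 * K)) := by
      have h0 := tendsto_pow_atTop_nhds_zero_of_lt_one
        (by norm_num : (0:ℝ) ≤ 1/2) (by norm_num : (1/2:ℝ) < 1)
      have h2 := h0.const_mul (B₂ * Real.exp (μ * t))
      simpa using tendsto_const_nhds.add h2
    apply ge_of_tendsto' hlim
    intro k
    have hexpk : Real.exp (μ * (t + (k:ℝ) * V)) = Real.exp (μ * t) * Real.exp (μ * V) ^ k := by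
      rw [show μ * (t + (k:ℝ) * V) = μ * t + (k:ℝ) * (μ * V) by ring, Real.exp_add,
        Real.exp_nat_mul]
    calc ‖f t‖ ≤ Mf t := hMle t t ht le_rfl
      _ ≤ 2 * K + c ^ k * Mf (t + (k:ℝ) * V) := hIter k t ht
      _ ≤ 2 * K + c ^ k * (B₂ * Real.exp (μ * (t + (k:ℝ) * V))) :=
          add_le_add_right (mul_le_mul_of_nonneg_left (hMexp _) (pow_nonneg hc0 k)) _
      _ = 2 * K + B₂ * Real.exp (μ * t) * (c * Real.exp (μ * V)) ^ k := by
          rw [hexpk, mul_pow]; ring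
      _ ≤ 2 * K + B₂ * Real.exp (μ * t) * (1/2 : ℝ) ^ k := by
          have hp1 : (c * Real.exp (μ * V)) ^ k ≤ (1/2 : ℝ) ^ k :=
            pow_le_pow_left₀ (mul_nonneg hc0 (Real.exp_pos _).le) hc1 k
          have hp2 : (0:ℝ) ≤ B₂ * Real.exp (μ * t) :=
            mul_nonneg hB₂0 (Real.exp_pos _).le
          nlinarith
  -- integrability of ψ at infinity
  have h2K : (0:ℝ) ≤ 2 * K := by linarith
  have hψint : IntegrableOn ψ (Ioi u₁) volume := by
    apply Integrable.mono' (g := fun t => C₄ * (2 * K) * t ^ (-2:ℝ))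
    · exact (integrableOn_Ioi_rpow_of_lt (by norm_num) hu₁0).const_mul (C₄ * (2 * K))
    · apply ContinuousOn.aestronglyMeasurable _ measurableSet_Ioi
      intro x hx
      exact (hψc x (lt_trans hu₁0 hx)).continuousWithinAt
    · rw [ae_restrict_iff' measurableSet_Ioi]
      apply ae_of_all
      intro t ht
      exact hψb t (le_of_lt ht) (2 * K) h2K (fun s hs1 _ => hFbnd s hs1)
  have hlim1 : Tendsto (fun u : ℝ => ∫ t in u₁..u, ψ t) atTop
      (nhds (∫ t in Ioi u₁, ψ t)) :=
    intervalIntegral_tendsto_integral_Ioi u₁ hψint tendsto_id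
  have hlim2 : Tendsto W atTop (nhds 0) := by
    apply squeeze_zero_norm' (a := fun u : ℝ => S * V * (2 * K) / u)
    · filter_upwards [eventually_ge_atTop u₁] with u hu
      exact hwin u hu (2 * K) h2K (fun s hs1 _ => hFbnd s hs1)
    · exact tendsto_const_nhds.div_atTop tendsto_id
  -- assemble the limit
  refine ⟨(f u₁ - W u₁) + 0 + ∫ t in Ioi u₁, ψ t, ?_⟩
  have hlim3 : Tendsto (fun u : ℝ => (f u₁ - W u₁) + W u + ∫ t in u₁..u, ψ t) atTop
      (nhds ((f u₁ - W u₁) + 0 + ∫ t in Ioi u₁, ψ t)) :=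
    (tendsto_const_nhds.add hlim2).add hlim1
  apply Tendsto.congr' _ hlim3
  filter_upwards [eventually_ge_atTop u₁] with u hu
  exact (hIdent u hu).symm
end

section
/- Suppose q_1 : ℝ → ℂ and q_2 : ℝ → ℂ both solve (E+), and suppose each is exponentially bounded: for i = 1, 2 there exist λ_i > 0 and constants B_i, u_i > 0 with |q_i(u)| ≤ B_i·e^{λ_i u} for all u ≥ u_i. Then q_1 and q_2 are linearly dependent over ℂ on (0,∞): there exist complex numbers c_1, c_2, not both zero, such that c_1 q_1(u) + c_2 q_2(u) = 0 for all u > 0. -/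
open MeasureTheory Filter Set

/-- Monotonicity of the shifts. -/
lemma v_mono {m : ℕ} {v : ℕ → ℝ} (hv : ∀ i, i < m → v i < v (i + 1)) :
    ∀ i j : ℕ, i ≤ j → j ≤ m → v i ≤ v j := by
  intro i j hij hjm
  induction j with
  | zero => simp [Nat.le_zero.mp hij]
  | succ k ih =>
    rcases Nat.lt_or_ge i (k + 1) with h | h
    · have h1 : v i ≤ v k := ih (Nat.lt_succ_iff.mp h) (le_trans (Nat.le_succ k) hjm)
      exact h1.trans (le_of_lt (hv k (Nat.lt_of_succ_le hjm)))
    · have : i = k + 1 := le_antisymm hij h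
      simp [this]

/-- Uniqueness for the scalar ODE `t r' = c r` backwards from a zero value. -/
lemma ode_zero {r : ℝ → ℂ} {a b : ℝ} {c : ℂ} (ha : 0 < a) (hab : a ≤ b)
    (hd : ∀ t ∈ Icc a b, HasDerivAt r (c * r t / t) t) (hb : r b = 0) :
    ∀ t ∈ Icc a b, r t = 0 := by
  set g : ℝ → ℂ := fun t => Complex.exp (-c * Real.log t) with hgdef
  have hgd : ∀ t ∈ Icc a b, HasDerivAt (fun t => r t * g t) 0 t := by
    intro t ht
    have ht0 : 0 < t := lt_of_lt_of_le ha ht.1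
    have h1 : HasDerivAt (fun t : ℝ => ((Real.log t : ℝ) : ℂ)) ((t⁻¹ : ℝ) : ℂ) t :=
      (Real.hasDerivAt_log (ne_of_gt ht0)).ofReal_comp
    have h2 : HasDerivAt (fun t : ℝ => -c * ((Real.log t : ℝ) : ℂ))
        (-c * ((t⁻¹ : ℝ) : ℂ)) t := h1.const_mul _
    have h3 : HasDerivAt g (Complex.exp (-c * Real.log t) * (-c * ((t⁻¹ : ℝ) : ℂ))) t := h2.cexp
    have h4 := (hd t ht).mul h3
    refine h4.congr_deriv ?_
    have htne : (t : ℂ) ≠ 0 := by exact_mod_cast ne_of_gt ht0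
    have : ((t⁻¹ : ℝ) : ℂ) = (t : ℂ)⁻¹ := by push_cast; ring
    rw [this]
    simp only [hgdef]
    field_simp
    ring
  have hcont : ContinuousOn (fun t => r t * g t) (Icc a b) :=
    fun t ht => ((hgd t ht).continuousAt).continuousWithinAt
  have hder : ∀ t ∈ Ico a b, HasDerivWithinAt (fun t => r t * g t) 0 (Ici t) t :=
    fun t ht => ((hgd t (Ico_subset_Icc_self ht)).hasDerivWithinAt)
  have hconst := constant_of_has_deriv_right_zero hcont hder
  intro t ht
  have h1 : r t * g t = r a * g a := hconst t ht
  have h2 : r b * g b = r a * g a := hconst b (right_mem_Icc.mpr hab)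
  rw [hb, zero_mul] at h2
  rw [← h2] at h1
  rcases mul_eq_zero.mp h1 with h | h
  · exact h
  · exact absurd h (Complex.exp_ne_zero _)

/-- A solution vanishing on `[U,∞)` vanishes on all of `(0,∞)`. -/
lemma backward {m : ℕ} {v : ℕ → ℝ} {α : ℕ → ℂ} (hv0 : v 0 = 0)
    (hv : ∀ i, i < m → v i < v (i + 1)) {q : ℝ → ℂ} {U : ℝ}
    (hq : SolvesEplus m v α q) (hU : 0 < U)
    (htail : ∀ u, U ≤ u → q u = 0) : ∀ u, 0 < u → q u = 0 := by
  set δ : ℝ := if m = 0 then 1 else v 1 with hδdef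
  have hδ : 0 < δ := by
    by_cases h : m = 0
    · simp [hδdef, h]
    · have h1 : 0 < m := Nat.pos_of_ne_zero h
      have h2 := hv 0 h1
      rw [hv0] at h2
      simpa [hδdef, h] using h2
  have hshift : ∀ j, 1 ≤ j → j ≤ m → δ ≤ v j := by
    intro j h1 h2
    have hm : m ≠ 0 := by omega
    have h3 := v_mono hv 1 j h1 h2
    simpa [hδdef, hm] using h3
  have key : ∀ n : ℕ, ∀ u : ℝ, 0 < u → U - n * δ ≤ u → q u = 0 := by
    intro n
    induction n with
    | zero => intro u hu h; exact htail u (by simpa using h)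
    | succ n ih =>
      intro u hu h
      by_cases hcase : U - n * δ ≤ u
      · exact ih u hu hcase
      push_neg at hcase
      set b : ℝ := U - n * δ with hb
      have hub : u ≤ b := le_of_lt hcase
      have hder : ∀ t ∈ Icc u b, HasDerivAt q (α 0 * q t / t) t := by
        intro t ht
        have ht0 : 0 < t := lt_of_lt_of_le hu ht.1
        obtain ⟨hdiff, heq⟩ := hq t ht0
        have hsum : ∑ j ∈ Finset.range (m + 1), α j * q (t + v j) = α 0 * q t := by
          rw [Finset.sum_range_succ']
          have hz : ∀ j ∈ Finset.range m, α (j + 1) * q (t + v (j + 1)) = 0 := by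
            intro j hj
            have hj' : j + 1 ≤ m := Finset.mem_range.mp hj
            have hvj : δ ≤ v (j + 1) := hshift (j + 1) (by omega) hj'
            have hstep : U - (n + 1 : ℕ) * δ ≤ u := h
            have harg : U - n * δ ≤ t + v (j + 1) := by
              push_cast at hstep ⊢
              have := ht.1
              nlinarith
            have harg0 : 0 < t + v (j + 1) := by
              have : (0:ℝ) < δ := hδ
              nlinarith [ht.1]
            rw [ih _ harg0 harg, mul_zero]
          rw [Finset.sum_eq_zero hz, hv0, add_zero, zero_add]
        rw [hsum] at heq
        have htne : (t : ℂ) ≠ 0 := by exact_mod_cast ne_of_gt ht0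
        have hval : deriv q t = α 0 * q t / t := by
          field_simp
          linear_combination heq
        exact hval ▸ hdiff.hasDerivAt
      have hbz : q b = 0 := ih b (lt_trans hu hcase) le_rfl
      exact ode_zero hu hub hder hbz u (left_mem_Icc.mpr hub)
  intro u hu
  obtain ⟨n, hn⟩ := exists_nat_ge ((U - u) / δ)
  apply key n u hu
  have h1 : U - u ≤ n * δ := by
    rw [div_le_iff₀ hδ] at hn
    linarith
  linarith

/-- The contraction estimate: an exponentially bounded solution vanishing at a
large point `U` vanishes on all of `[U,∞)`. -/
lemma tail_zero {m : ℕ} {v : ℕ → ℝ} {α : ℕ → ℂ}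
    (hvpos : ∀ j, j ≤ m → 0 ≤ v j) {q : ℝ → ℂ} {lam U B : ℝ}
    (hq : SolvesEplus m v α q) (hlam : 0 < lam) (hU : 0 < U)
    (hK : ∑ j ∈ Finset.range (m + 1), ‖α j‖ * Real.exp (lam * v j) < lam * U)
    (hbound : ∀ u, U ≤ u → ‖q u‖ ≤ B * Real.exp (lam * u))
    (hqU : q U = 0) : ∀ u, U ≤ u → q u = 0 := by
  obtain ⟨K, hKdef⟩ : ∃ K : ℝ, K = ∑ j ∈ Finset.range (m + 1),
      ‖α j‖ * Real.exp (lam * v j) := ⟨_, rfl⟩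
  rw [← hKdef] at hK
  have hK0 : 0 ≤ K := by
    rw [hKdef]
    exact Finset.sum_nonneg fun j _ => mul_nonneg (norm_nonneg _) (Real.exp_pos _).le
  obtain ⟨f, hfdef⟩ : ∃ f : ℝ → ℝ, f = fun w => ‖q w‖ * Real.exp (-(lam * w)) :=
    ⟨_, rfl⟩
  have hf0 : ∀ w, 0 ≤ f w := by
    intro w
    simp only [hfdef]
    positivity
  obtain ⟨S, hSdef⟩ : ∃ S : Set ℝ, S = f '' Ici U := ⟨_, rfl⟩
  have hSne : S.Nonempty := ⟨f U, hSdef ▸ mem_image_of_mem f self_mem_Ici⟩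
  have hSbdd : BddAbove S := by
    refine ⟨max B 0, ?_⟩
    rw [hSdef]
    rintro x ⟨w, hw, rfl⟩
    have h1 := hbound w hw
    have h3 := mul_le_mul_of_nonneg_right h1 (Real.exp_pos (-(lam * w))).le
    have h2 : f w ≤ B := by
      simp only [hfdef]
      calc ‖q w‖ * Real.exp (-(lam * w))
          ≤ B * Real.exp (lam * w) * Real.exp (-(lam * w)) := h3
        _ = B := by rw [mul_assoc, ← Real.exp_add, add_neg_cancel, Real.exp_zero, mul_one]
    exact le_trans h2 (le_max_left _ _)
  obtain ⟨M, hMdef⟩ : ∃ M : ℝ, M = sSup S := ⟨_, rfl⟩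
  have hfM : ∀ w, U ≤ w → f w ≤ M := fun w hw =>
    hMdef ▸ le_csSup hSbdd (hSdef ▸ ⟨w, hw, rfl⟩)
  have hM0 : 0 ≤ M := le_trans (hf0 U) (hfM U le_rfl)
  have hqM : ∀ w, U ≤ w → ‖q w‖ ≤ M * Real.exp (lam * w) := by
    intro w hw
    calc ‖q w‖ = f w * Real.exp (lam * w) := by
          simp only [hfdef]
          rw [mul_assoc, ← Real.exp_add, neg_add_cancel, Real.exp_zero, mul_one]
      _ ≤ M * Real.exp (lam * w) :=
          mul_le_mul_of_nonneg_right (hfM w hw) (Real.exp_pos _).le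
  -- the integrand
  obtain ⟨g, hgdef⟩ : ∃ g : ℝ → ℂ,
      g = fun t => (∑ j ∈ Finset.range (m + 1), α j * q (t + v j)) / (t : ℂ) := ⟨_, rfl⟩
  have hcontq : ∀ t : ℝ, 0 < t → ContinuousAt q t := fun t ht => (hq t ht).1.continuousAt
  have hgcont : ∀ u' : ℝ, ContinuousOn g (Icc U u') := by
    intro u'
    rw [hgdef]
    apply ContinuousOn.div
    · apply continuousOn_finset_sum
      intro j hj
      apply ContinuousOn.mul continuousOn_const
      intro t ht
      have hvj : 0 ≤ v j := hvpos j (Nat.lt_succ_iff.mp (Finset.mem_range.mp hj))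
      have ht0 : 0 < t := lt_of_lt_of_le hU ht.1
      have harg : 0 < t + v j := by linarith
      exact (ContinuousAt.comp (f := fun s : ℝ => s + v j) (hcontq _ harg)
        ((continuous_add_right (v j)).continuousAt)).continuousWithinAt
    · exact Complex.continuous_ofReal.continuousOn
    · intro t ht
      have ht0 : 0 < t := lt_of_lt_of_le hU ht.1
      exact_mod_cast ne_of_gt ht0
  have hmain : ∀ u, U ≤ u →
      ‖q u‖ ≤ K * M / (lam * U) * Real.exp (lam * u) := by
    intro u hu
    have hder : ∀ t ∈ Icc U u, HasDerivAt q (g t) t := by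
      intro t ht
      have ht0 : 0 < t := lt_of_lt_of_le hU ht.1
      obtain ⟨hdiff, heq⟩ := hq t ht0
      have htne : (t : ℂ) ≠ 0 := by exact_mod_cast ne_of_gt ht0
      have hval : deriv q t = g t := by
        rw [hgdef]
        show deriv q t = _ / _
        field_simp
        linear_combination heq
      exact hval ▸ hdiff.hasDerivAt
    have hint : IntervalIntegrable g volume U u := by
      apply ContinuousOn.intervalIntegrable
      rw [uIcc_of_le hu]
      exact hgcont u
    have hFTC := intervalIntegral.integral_eq_sub_of_hasDerivAt
      (fun t ht => hder t (by rwa [uIcc_of_le hu] at ht)) hint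
    have hqu : q u = ∫ t in U..u, g t := by rw [hFTC, hqU, sub_zero]
    have hgb : ∀ t ∈ Icc U u, ‖g t‖ ≤ K * M / U * Real.exp (lam * t) := by
      intro t ht
      have ht0 : 0 < t := lt_of_lt_of_le hU ht.1
      have hnum : ‖∑ j ∈ Finset.range (m + 1), α j * q (t + v j)‖
          ≤ K * M * Real.exp (lam * t) := by
        calc ‖∑ j ∈ Finset.range (m + 1), α j * q (t + v j)‖
            ≤ ∑ j ∈ Finset.range (m + 1), ‖α j * q (t + v j)‖ := norm_sum_le _ _
          _ ≤ ∑ j ∈ Finset.range (m + 1),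
              ‖α j‖ * (M * Real.exp (lam * (t + v j))) := by
              apply Finset.sum_le_sum
              intro j hj
              rw [norm_mul]
              have hvj : 0 ≤ v j := hvpos j (Nat.lt_succ_iff.mp (Finset.mem_range.mp hj))
              have harg : U ≤ t + v j := by linarith [ht.1]
              have hb := hqM _ harg
              exact mul_le_mul_of_nonneg_left hb (norm_nonneg _)
          _ = (∑ j ∈ Finset.range (m + 1), ‖α j‖ * Real.exp (lam * v j))
              * (M * Real.exp (lam * t)) := by
              rw [Finset.sum_mul]
              apply Finset.sum_congr rfl
              intro j _
              rw [mul_add, Real.exp_add]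
              ring
          _ = K * M * Real.exp (lam * t) := by rw [← hKdef]; ring
      have hgt : ‖g t‖ = ‖∑ j ∈ Finset.range (m + 1), α j * q (t + v j)‖ / t := by
        simp only [hgdef]
        rw [norm_div, Complex.norm_real, Real.norm_eq_abs, abs_of_pos ht0]
      rw [hgt]
      calc ‖∑ j ∈ Finset.range (m + 1), α j * q (t + v j)‖ / t
          ≤ K * M * Real.exp (lam * t) / U := by
            apply div_le_div₀ (by positivity) hnum hU ht.1
        _ = K * M / U * Real.exp (lam * t) := by ring
    have h1 : ‖∫ t in U..u, g t‖ ≤ ∫ t in U..u, K * M / U * Real.exp (lam * t) := by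
      calc ‖∫ t in U..u, g t‖ ≤ ∫ t in U..u, ‖g t‖ :=
            intervalIntegral.norm_integral_le_integral_norm hu
        _ ≤ ∫ t in U..u, K * M / U * Real.exp (lam * t) :=
            intervalIntegral.integral_mono_on hu hint.norm
              (Continuous.intervalIntegrable (by fun_prop) U u) hgb
    have h2 : ∫ t in U..u, K * M / U * Real.exp (lam * t)
        = K * M / U * ((Real.exp (lam * u) - Real.exp (lam * U)) / lam) := by
      rw [intervalIntegral.integral_const_mul]
      congr 1
      have hanti : ∀ t ∈ uIcc U u,
          HasDerivAt (fun t => Real.exp (lam * t) / lam) (Real.exp (lam * t)) t := by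
        intro t _
        have h := ((hasDerivAt_id t).const_mul lam).exp
        have h' := h.div_const lam
        refine h'.congr_deriv ?_
        simp [hlam.ne']
      rw [intervalIntegral.integral_eq_sub_of_hasDerivAt hanti
        (Continuous.intervalIntegrable (by fun_prop) U u)]
      ring
    have h3 : K * M / U * ((Real.exp (lam * u) - Real.exp (lam * U)) / lam)
        ≤ K * M / (lam * U) * Real.exp (lam * u) := by
      have hE : 0 < Real.exp (lam * U) := Real.exp_pos _
      have hKM : 0 ≤ K * M / U := by positivity
      calc K * M / U * ((Real.exp (lam * u) - Real.exp (lam * U)) / lam)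
          ≤ K * M / U * (Real.exp (lam * u) / lam) := by
            apply mul_le_mul_of_nonneg_left _ hKM
            apply (div_le_div_iff_of_pos_right hlam).mpr
            linarith
        _ = K * M / (lam * U) * Real.exp (lam * u) := by
            rw [div_mul_div_comm, div_mul_eq_mul_div, mul_comm U lam]
    calc ‖q u‖ = ‖∫ t in U..u, g t‖ := by
          rw [hqu]
      _ ≤ ∫ t in U..u, K * M / U * Real.exp (lam * t) := h1
      _ = K * M / U * ((Real.exp (lam * u) - Real.exp (lam * U)) / lam) := h2
      _ ≤ K * M / (lam * U) * Real.exp (lam * u) := h3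
  have hMle : M ≤ K * M / (lam * U) := by
    have h2 : sSup S ≤ K * M / (lam * U) := by
      apply csSup_le hSne
      intro x hx
      rw [hSdef] at hx
      obtain ⟨w, hw, rfl⟩ := hx
      have h1 := hmain w hw
      simp only [hfdef]
      calc ‖q w‖ * Real.exp (-(lam * w))
          ≤ K * M / (lam * U) * Real.exp (lam * w) * Real.exp (-(lam * w)) :=
            mul_le_mul_of_nonneg_right h1 (Real.exp_pos _).le
        _ = K * M / (lam * U) := by
            rw [mul_assoc, ← Real.exp_add, add_neg_cancel, Real.exp_zero, mul_one]
    rw [← hMdef] at h2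
    exact h2
  have hMzero : M = 0 := by
    have hlamU : 0 < lam * U := mul_pos hlam hU
    rw [le_div_iff₀ hlamU] at hMle
    nlinarith
  intro u hu
  have h1 := hqM u hu
  rw [hMzero, zero_mul] at h1
  have h2 := norm_nonneg (q u)
  exact norm_eq_zero.mp (le_antisymm h1 h2)


/-- Combining `tail_zero` and `backward`: an exponentially bounded solution
vanishing at a sufficiently large point vanishes identically on `(0,∞)`. -/
lemma solution_vanishes {m : ℕ} {v : ℕ → ℝ} {α : ℕ → ℂ} (hv0 : v 0 = 0)
    (hv : ∀ i, i < m → v i < v (i + 1)) {q : ℝ → ℂ} {lam U B : ℝ}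
    (hq : SolvesEplus m v α q) (hlam : 0 < lam) (hU : 0 < U)
    (hK : ∑ j ∈ Finset.range (m + 1), ‖α j‖ * Real.exp (lam * v j) < lam * U)
    (hbound : ∀ u, U ≤ u → ‖q u‖ ≤ B * Real.exp (lam * u))
    (hqU : q U = 0) : ∀ u, 0 < u → q u = 0 := by
  have hvpos : ∀ j, j ≤ m → 0 ≤ v j := by
    intro j hj
    have h := v_mono hv 0 j (Nat.zero_le j) hj
    rwa [hv0] at h
  exact backward hv0 hv hq hU (tail_zero hvpos hq hlam hU hK hbound hqU)

/-- Linear combinations of solutions are solutions. -/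
lemma solves_combo {m : ℕ} {v : ℕ → ℝ} {α : ℕ → ℂ} {q₁ q₂ : ℝ → ℂ} (c₁ c₂ : ℂ)
    (h₁ : SolvesEplus m v α q₁) (h₂ : SolvesEplus m v α q₂) :
    SolvesEplus m v α (fun u => c₁ * q₁ u + c₂ * q₂ u) := by
  intro u hu
  obtain ⟨hd₁, he₁⟩ := h₁ u hu
  obtain ⟨hd₂, he₂⟩ := h₂ u hu
  refine ⟨(hd₁.const_mul c₁).add (hd₂.const_mul c₂), ?_⟩
  have hder : deriv (fun u => c₁ * q₁ u + c₂ * q₂ u) u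
      = c₁ * deriv q₁ u + c₂ * deriv q₂ u := by
    rw [deriv_fun_add (hd₁.const_mul c₁) (hd₂.const_mul c₂),
      deriv_const_mul c₁ hd₁, deriv_const_mul c₂ hd₂]
  rw [hder]
  have hsum : ∑ j ∈ Finset.range (m + 1), α j * (c₁ * q₁ (u + v j) + c₂ * q₂ (u + v j))
      = c₁ * ∑ j ∈ Finset.range (m + 1), α j * q₁ (u + v j)
        + c₂ * ∑ j ∈ Finset.range (m + 1), α j * q₂ (u + v j) := by
    rw [Finset.mul_sum, Finset.mul_sum, ← Finset.sum_add_distrib]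
    apply Finset.sum_congr rfl
    intro j _
    ring
  rw [hsum, ← he₁, ← he₂]
  ring

theorem stmt19 (m : ℕ) (v : ℕ → ℝ) (α : ℕ → ℂ)
    (hv0 : v 0 = 0) (hv : ∀ i, i < m → v i < v (i + 1))
    (hα : ∀ j, 1 ≤ j → j ≤ m → α j ≠ 0)
    (q₁ q₂ : ℝ → ℂ) (hq₁ : SolvesEplus m v α q₁) (hq₂ : SolvesEplus m v α q₂)
    (lam₁ lam₂ B₁ B₂ u₁ u₂ : ℝ) (hlam₁ : 0 < lam₁) (hlam₂ : 0 < lam₂)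
    (hB₁ : 0 < B₁) (hB₂ : 0 < B₂) (hu₁ : 0 < u₁) (hu₂ : 0 < u₂)
    (hbound₁ : ∀ u : ℝ, u₁ ≤ u → ‖q₁ u‖ ≤ B₁ * Real.exp (lam₁ * u))
    (hbound₂ : ∀ u : ℝ, u₂ ≤ u → ‖q₂ u‖ ≤ B₂ * Real.exp (lam₂ * u)) :
    ∃ c₁ c₂ : ℂ, (c₁ ≠ 0 ∨ c₂ ≠ 0) ∧
      ∀ u : ℝ, 0 < u → c₁ * q₁ u + c₂ * q₂ u = 0 := by
  obtain ⟨lam, hlamdef⟩ : ∃ lam : ℝ, lam = max lam₁ lam₂ := ⟨_, rfl⟩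
  have hlam : 0 < lam := by rw [hlamdef]; exact lt_max_of_lt_left hlam₁
  have hlam1 : lam₁ ≤ lam := hlamdef ▸ le_max_left _ _
  have hlam2 : lam₂ ≤ lam := hlamdef ▸ le_max_right _ _
  obtain ⟨K, hKdef⟩ : ∃ K : ℝ, K = ∑ j ∈ Finset.range (m + 1),
      ‖α j‖ * Real.exp (lam * v j) := ⟨_, rfl⟩
  have hK0 : 0 ≤ K := by
    rw [hKdef]
    exact Finset.sum_nonneg fun j _ => mul_nonneg (norm_nonneg _) (Real.exp_pos _).le
  obtain ⟨U, hUdef⟩ : ∃ U : ℝ, U = max (max u₁ u₂) (K / lam + 1) := ⟨_, rfl⟩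
  have hU1 : u₁ ≤ U := hUdef ▸ le_trans (le_max_left _ _) (le_max_left _ _)
  have hU2 : u₂ ≤ U := hUdef ▸ le_trans (le_max_right _ _) (le_max_left _ _)
  have hU0 : 0 < U := lt_of_lt_of_le hu₁ hU1
  have hKU : K < lam * U := by
    have h1 : K / lam + 1 ≤ U := hUdef ▸ le_max_right _ _
    have h2 : K / lam < U := by linarith
    rw [div_lt_iff₀ hlam] at h2
    linarith [h2]
  have hexp : ∀ lam' : ℝ, lam' ≤ lam → ∀ u : ℝ, U ≤ u →
      Real.exp (lam' * u) ≤ Real.exp (lam * u) := by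
    intro lam' hl u hu
    apply Real.exp_le_exp.mpr
    have hu0 : 0 ≤ u := le_of_lt (lt_of_lt_of_le hU0 hu)
    exact mul_le_mul_of_nonneg_right hl hu0
  have hb₁ : ∀ u, U ≤ u → ‖q₁ u‖ ≤ B₁ * Real.exp (lam * u) := by
    intro u hu
    calc ‖q₁ u‖ ≤ B₁ * Real.exp (lam₁ * u) := hbound₁ u (le_trans hU1 hu)
      _ ≤ B₁ * Real.exp (lam * u) :=
          mul_le_mul_of_nonneg_left (hexp lam₁ hlam1 u hu) hB₁.le
  have hb₂ : ∀ u, U ≤ u → ‖q₂ u‖ ≤ B₂ * Real.exp (lam * u) := by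
    intro u hu
    calc ‖q₂ u‖ ≤ B₂ * Real.exp (lam₂ * u) := hbound₂ u (le_trans hU2 hu)
      _ ≤ B₂ * Real.exp (lam * u) :=
          mul_le_mul_of_nonneg_left (hexp lam₂ hlam2 u hu) hB₂.le
  rw [hKdef] at hKU
  by_cases hz : q₁ U = 0
  · refine ⟨1, 0, Or.inl one_ne_zero, ?_⟩
    intro u hu
    have hvan := solution_vanishes hv0 hv hq₁ hlam hU0 hKU hb₁ hz u hu
    rw [hvan]
    ring
  · refine ⟨q₂ U, -q₁ U, Or.inr (neg_ne_zero.mpr hz), ?_⟩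
    have hqr : SolvesEplus m v α (fun u => q₂ U * q₁ u + (-q₁ U) * q₂ u) :=
      solves_combo _ _ hq₁ hq₂
    have hbr : ∀ u, U ≤ u → ‖q₂ U * q₁ u + (-q₁ U) * q₂ u‖
        ≤ (‖q₂ U‖ * B₁ + ‖q₁ U‖ * B₂) * Real.exp (lam * u) := by
      intro u hu
      calc ‖q₂ U * q₁ u + (-q₁ U) * q₂ u‖
          ≤ ‖q₂ U * q₁ u‖ + ‖(-q₁ U) * q₂ u‖ :=
            norm_add_le _ _
        _ = ‖q₂ U‖ * ‖q₁ u‖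
            + ‖q₁ U‖ * ‖q₂ u‖ := by
            rw [norm_mul, norm_mul, norm_neg]
        _ ≤ ‖q₂ U‖ * (B₁ * Real.exp (lam * u))
            + ‖q₁ U‖ * (B₂ * Real.exp (lam * u)) := by
            apply add_le_add
            · exact mul_le_mul_of_nonneg_left (hb₁ u hu) (norm_nonneg _)
            · exact mul_le_mul_of_nonneg_left (hb₂ u hu) (norm_nonneg _)
        _ = (‖q₂ U‖ * B₁ + ‖q₁ U‖ * B₂) * Real.exp (lam * u) := by
            ring
    have hrU : q₂ U * q₁ U + (-q₁ U) * q₂ U = 0 := by ring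
    exact solution_vanishes hv0 hv hqr hlam hU0 hKU hbr hrU
end
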